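/- arXiv:2307.02151 — 3 statements merged into one kernel-verified Lean document; each statement's English description precedes it below -/
import Mathlib

section
/- Let u and v be distinct positive words in two letters (i.e. distinct elements of the free monoid on a two-element alphabet), and let ℓ = ℓ(u) + ℓ(v) be the sum of their lengths. For n with n ≥ 2ℓ, if x and y are independent uniformly random elements of the symmetric group S_n, then the probability that u(x,y) = v(x,y) (equivalently, that the evaluation of the word w = u·v⁻¹ at (x,y) is the identity permutation) is at most (2ℓ/n)^⌊n/(2ℓ)⌋. -/
open Equiv Nat Finset

namespace WSP

variable {n : ℕ}

abbrev Pair (n : ℕ) := Fin 2 → Equiv.Perm (Fin n)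

def walk (X : Pair n) : List (Fin 2) → Fin n → Fin n
  | [], z => z
  | c :: L, z => walk X L (X c z)

def traj (X : Pair n) : List (Fin 2) → Fin n → List (Fin n)
  | [], _ => []
  | c :: L, z => X c z :: traj X L (X c z)

def Ext (F : Fin 2 → Finset (Fin n)) (R : Pair n) : Finset (Pair n) :=
  Finset.univ.filter fun Y => ∀ c, ∀ a ∈ F c, Y c a = R c a

def fwalk (F : Fin 2 → Finset (Fin n)) (R : Pair n) : List (Fin 2) → Fin n → Option (Fin n)
  | [], z => some z
  | c :: L, z => if z ∈ F c then fwalk F R L (R c z) else none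

def Fext (X : Pair n) : (Fin 2 → Finset (Fin n)) → List (Fin 2) → Fin n → Fin 2 → Finset (Fin n)
  | F, [], _ => F
  | F, c :: L, z => Fext X (Function.update F c (insert z (F c))) L (X c z)

def size (F : Fin 2 → Finset (Fin n)) : ℕ := (F 0).card + (F 1).card

def updR (R : Pair n) (c : Fin 2) (z q : Fin n) : Pair n :=
  Function.update R c (Equiv.swap (R c z) q * R c)

lemma fin2 (c : Fin 2) : c = 0 ∨ c = 1 := by revert c; decide

lemma walk_append (X : Pair n) (L1 L2 : List (Fin 2)) (z : Fin n) :
    walk X (L1 ++ L2) z = walk X L2 (walk X L1 z) := by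
  induction L1 generalizing z with
  | nil => rfl
  | cons c L ih => simp [walk, ih]

lemma mem_Ext {F : Fin 2 → Finset (Fin n)} {R Y : Pair n} :
    Y ∈ Ext F R ↔ ∀ c, ∀ a ∈ F c, Y c a = R c a := by simp [Ext]

lemma Ext_ref {F : Fin 2 → Finset (Fin n)} {R X : Pair n} (hX : X ∈ Ext F R) :
    Ext F R = Ext F X := by
  ext Y
  simp only [mem_Ext] at *
  constructor <;> intro h c a ha <;> rw [h c a ha]
  · rw [hX c a ha]
  · rw [← hX c a ha]

lemma size_update_le (F : Fin 2 → Finset (Fin n)) (c : Fin 2) (z : Fin n) :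
    size (Function.update F c (insert z (F c))) ≤ size F + 1 := by
  rcases fin2 c with rfl | rfl
  · have h := Finset.card_insert_le z (F 0)
    unfold size
    rw [Function.update_self, Function.update_of_ne (by decide)]
    omega
  · have h := Finset.card_insert_le z (F 1)
    unfold size
    rw [Function.update_self, Function.update_of_ne (by decide)]
    omega

lemma updR_apply_z (R : Pair n) (c : Fin 2) (z q : Fin n) : updR R c z q c z = q := by
  simp [updR, Function.update_self, Equiv.Perm.mul_apply, Equiv.swap_apply_left]

lemma updR_apply (R : Pair n) {c : Fin 2} {z q a : Fin n} (h1 : a ≠ z) (h2 : R c a ≠ q) :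
    updR R c z q c a = R c a := by
  simp only [updR, Function.update_self, Equiv.Perm.mul_apply]
  exact Equiv.swap_apply_of_ne_of_ne (fun h => h1 ((R c).injective h)) h2

lemma updR_other (R : Pair n) {c c' : Fin 2} (h : c' ≠ c) (z q : Fin n) :
    updR R c z q c' = R c' := Function.update_of_ne h _ _

lemma Ext_insert {F : Fin 2 → Finset (Fin n)} {R : Pair n} {c : Fin 2} {z q : Fin n}
    (hz : z ∉ F c) (hq : q ∉ (F c).image (R c)) :
    Ext (Function.update F c (insert z (F c))) (updR R c z q)
      = (Ext F R).filter fun Y => Y c z = q := by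
  ext Y
  simp only [mem_Ext, Finset.mem_filter]
  constructor
  · intro h
    refine ⟨fun c' a ha => ?_, ?_⟩
    · rcases eq_or_ne c' c with rfl | hcc
      · have haz : a ≠ z := fun he => hz (he ▸ ha)
        have haq : R c' a ≠ q := fun he => hq (he ▸ Finset.mem_image_of_mem _ ha)
        have := h c' a (by rw [Function.update_self]; exact Finset.mem_insert_of_mem ha)
        rwa [updR_apply R haz haq] at this
      · have := h c' a (by rwa [Function.update_of_ne hcc])
        rwa [updR_other R hcc] at this
    · have := h c z (by rw [Function.update_self]; exact Finset.mem_insert_self _ _)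
      rwa [updR_apply_z] at this
  · rintro ⟨hY, hq'⟩
    intro c' a ha
    rcases eq_or_ne c' c with rfl | hcc
    · rw [Function.update_self] at ha
      rcases Finset.mem_insert.mp ha with rfl | ha
      · rw [updR_apply_z]; exact hq'
      · have haz : a ≠ z := fun he => hz (he ▸ ha)
        have haq : R c' a ≠ q := fun he => hq (he ▸ Finset.mem_image_of_mem _ ha)
        rw [updR_apply R haz haq]; exact hY c' a ha
    · rw [Function.update_of_ne hcc] at ha
      rw [updR_other R hcc]; exact hY c' a ha

lemma mem_Ext_update {F : Fin 2 → Finset (Fin n)} {R Y : Pair n} {c : Fin 2} {z : Fin n} :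
    Y ∈ Ext (Function.update F c (insert z (F c))) R ↔ Y ∈ Ext F R ∧ Y c z = R c z := by
  simp only [mem_Ext]
  constructor
  · intro h
    refine ⟨fun c' a ha => ?_, ?_⟩
    · rcases eq_or_ne c' c with rfl | hcc
      · exact h c' a (by rw [Function.update_self]; exact Finset.mem_insert_of_mem ha)
      · exact h c' a (by rwa [Function.update_of_ne hcc])
    · exact h c z (by rw [Function.update_self]; exact Finset.mem_insert_self _ _)
  · rintro ⟨hY, hz'⟩ c' a ha
    rcases eq_or_ne c' c with rfl | hcc
    · rw [Function.update_self] at ha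
      rcases Finset.mem_insert.mp ha with rfl | ha
      · exact hz'
      · exact hY c' a ha
    · rw [Function.update_of_ne hcc] at ha
      exact hY c' a ha

lemma card_fiber_eq {F : Fin 2 → Finset (Fin n)} {R : Pair n} {c : Fin 2} (z : Fin n)
    {q1 q2 : Fin n} (h1 : q1 ∉ (F c).image (R c)) (h2 : q2 ∉ (F c).image (R c)) :
    ((Ext F R).filter fun Y => Y c z = q1).card
      = ((Ext F R).filter fun Y => Y c z = q2).card := by
  have key : ∀ (p1 p2 : Fin n), p1 ∉ (F c).image (R c) → p2 ∉ (F c).image (R c) →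
      ∀ Y ∈ (Ext F R).filter fun Y => Y c z = p1,
      Function.update Y c (Equiv.swap p1 p2 * Y c) ∈ (Ext F R).filter fun Y => Y c z = p2 := by
    intro p1 p2 hp1 hp2 Y hY
    rw [Finset.mem_filter] at hY ⊢
    obtain ⟨hY1, hY2⟩ := hY
    constructor
    · rw [mem_Ext]
      intro c' a ha
      rcases eq_or_ne c' c with rfl | hcc
      · rw [Function.update_self, Equiv.Perm.mul_apply, mem_Ext.mp hY1 c' a ha]
        exact Equiv.swap_apply_of_ne_of_ne (fun h => hp1 (h ▸ Finset.mem_image_of_mem _ ha))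
          (fun h => hp2 (h ▸ Finset.mem_image_of_mem _ ha))
      · rw [Function.update_of_ne hcc]
        exact mem_Ext.mp hY1 c' a ha
    · rw [Function.update_self, Equiv.Perm.mul_apply, hY2, Equiv.swap_apply_left]
  have inv : ∀ (p1 p2 : Fin n) (Y : Pair n),
      Function.update (Function.update Y c (Equiv.swap p1 p2 * Y c)) c
        (Equiv.swap p2 p1 * Function.update Y c (Equiv.swap p1 p2 * Y c) c) = Y := by
    intro p1 p2 Y
    simp only [Function.update_self, Function.update_idem]
    rw [Equiv.swap_comm p2 p1, ← mul_assoc, Equiv.swap_mul_self, one_mul,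
      Function.update_eq_self]
  apply Finset.card_bij' (fun Y _ => Function.update Y c (Equiv.swap q1 q2 * Y c))
    (fun Y _ => Function.update Y c (Equiv.swap q2 q1 * Y c))
  · intro Y hY; exact inv q1 q2 Y
  · intro Y hY; exact inv q2 q1 Y
  · intro Y hY; exact key q1 q2 h1 h2 Y hY
  · intro Y hY; exact key q2 q1 h2 h1 Y hY

lemma fiber_mem_compl {F : Fin 2 → Finset (Fin n)} {R : Pair n} {c : Fin 2} {z : Fin n}
    (hz : z ∉ F c) {Y : Pair n} (hY : Y ∈ Ext F R) :
    Y c z ∈ ((F c).image (R c))ᶜ := by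
  rw [Finset.mem_compl]
  intro hmem
  obtain ⟨a, ha, hEq⟩ := Finset.mem_image.mp hmem
  have : Y c a = R c a := mem_Ext.mp hY c a ha
  have : Y c z = Y c a := by rw [this, hEq]
  exact hz (((Y c).injective this) ▸ ha)

lemma key_inj {F : Fin 2 → Finset (Fin n)} {R : Pair n} {c : Fin 2} {z : Fin n}
    (hz : z ∉ F c) {q1 q2 : Fin n} (h1 : q1 ∉ (F c).image (R c))
    (h2 : q2 ∉ (F c).image (R c)) (hne : q1 ≠ q2) :
    ∀ (L : List (Fin 2)) (z1 z2 T : Fin n),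
      fwalk (Function.update F c (insert z (F c))) (updR R c z q1) L z1 = some T →
      fwalk (Function.update F c (insert z (F c))) (updR R c z q2) L z2 = some T →
      z1 = z2 := by
  intro L
  induction L with
  | nil =>
    intro z1 z2 T hw1 hw2
    simp only [fwalk, Option.some.injEq] at hw1 hw2
    rw [hw1, hw2]
  | cons c' L ih =>
    intro z1 z2 T hw1 hw2
    by_cases m1 : z1 ∈ Function.update F c (insert z (F c)) c'
    · by_cases m2 : z2 ∈ Function.update F c (insert z (F c)) c'
      · rw [fwalk, if_pos m1] at hw1
        rw [fwalk, if_pos m2] at hw2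
        have heq := ih _ _ _ hw1 hw2
        rcases eq_or_ne c' c with rfl | hcc
        · rw [Function.update_self] at m1 m2
          rcases Finset.mem_insert.mp m1 with rfl | hm1
          · rcases Finset.mem_insert.mp m2 with rfl | hm2
            · rfl
            · exfalso
              rw [updR_apply_z] at heq
              rw [updR_apply R (by rintro rfl; exact hz hm2)
                (by intro he; apply h2; rw [← he]; exact Finset.mem_image_of_mem _ hm2)] at heq
              apply h1; rw [heq]; exact Finset.mem_image_of_mem _ hm2
          · rcases Finset.mem_insert.mp m2 with rfl | hm2
            · exfalso
              rw [updR_apply_z] at heq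
              rw [updR_apply R (by rintro rfl; exact hz hm1)
                (by intro he; apply h1; rw [← he]; exact Finset.mem_image_of_mem _ hm1)] at heq
              apply h2; rw [← heq]; exact Finset.mem_image_of_mem _ hm1
            · rw [updR_apply R (by rintro rfl; exact hz hm1)
                  (by intro he; apply h1; rw [← he]; exact Finset.mem_image_of_mem _ hm1),
                updR_apply R (by rintro rfl; exact hz hm2)
                  (by intro he; apply h2; rw [← he]; exact Finset.mem_image_of_mem _ hm2)] at heq
              exact (R _).injective heq
        · rw [updR_other R hcc, updR_other R hcc] at heq
          exact (R c').injective heq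
      · rw [fwalk, if_neg m2] at hw2
        exact absurd hw2 (by simp)
    · rw [fwalk, if_neg m1] at hw1
      exact absurd hw1 (by simp)

lemma ext_upd_card_bound {F : Fin 2 → Finset (Fin n)} {R : Pair n} {c : Fin 2} {z q0 : Fin n}
    (hm : z ∉ F c) (hq0 : q0 ∉ (F c).image (R c)) {S : ℕ} (hFS : (F c).card ≤ S) :
    (n - S) * (Ext (Function.update F c (insert z (F c))) (updR R c z q0)).card
      ≤ (Ext F R).card := by
  have hpart : (Ext F R).card
      = ∑ q ∈ ((F c).image (R c))ᶜ, ((Ext F R).filter fun Y => Y c z = q).card :=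
    Finset.card_eq_sum_card_fiberwise (fun Y hY => fiber_mem_compl hm hY)
  have hq0t : q0 ∈ ((F c).image (R c))ᶜ := Finset.mem_compl.mpr hq0
  have hconst : ∀ q ∈ ((F c).image (R c))ᶜ,
      ((Ext F R).filter fun Y => Y c z = q).card
        = ((Ext F R).filter fun Y => Y c z = q0).card :=
    fun q hq => card_fiber_eq z (Finset.mem_compl.mp hq) hq0
  have htcard : (((F c).image (R c))ᶜ).card = n - (F c).card := by
    rw [Finset.card_compl, Finset.card_image_of_injective _ (R c).injective, Fintype.card_fin]
  have hEconst : (Ext F R).card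
      = (n - (F c).card) * ((Ext F R).filter fun Y => Y c z = q0).card := by
    rw [hpart, Finset.sum_congr rfl hconst, Finset.sum_const, htcard, smul_eq_mul]
  rw [Ext_insert hm hq0, hEconst]
  exact Nat.mul_le_mul_right _ (Nat.sub_le_sub_left hFS n)

lemma card_le_size {F : Fin 2 → Finset (Fin n)} (c : Fin 2) : (F c).card ≤ size F := by
  rcases fin2 c with rfl | rfl <;> unfold size <;> omega

lemma image_insert_updR {F : Fin 2 → Finset (Fin n)} {R : Pair n} {c : Fin 2} {z q : Fin n}
    (hz : z ∉ F c) (hq : q ∉ (F c).image (R c)) :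
    (insert z (F c)).image (updR R c z q c) = insert q ((F c).image (R c)) := by
  rw [Finset.image_insert, updR_apply_z]
  congr 1
  apply Finset.image_congr
  intro a ha
  simp only [Finset.mem_coe] at ha
  apply updR_apply R
  · rintro rfl; exact hz ha
  · intro he; apply hq; rw [← he]; exact Finset.mem_image_of_mem _ ha

theorem lemW (S : ℕ) : ∀ (L : List (Fin 2)) (F : Fin 2 → Finset (Fin n)) (R : Pair n)
    (z T : Fin n), size F + L.length ≤ S →
    (n - S) * ((Ext F R).filter fun Y => walk Y L z = T).card ≤
      L.length * (Ext F R).card +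
        (n - S) * (if fwalk F R L z = some T then (Ext F R).card else 0) := by
  intro L
  induction L with
  | nil =>
    intro F R z T hS
    by_cases h : z = T
    · subst h
      have h1 : ((Ext F R).filter fun Y => walk Y [] z = z) = Ext F R := by
        apply Finset.filter_true_of_mem; intro Y _; rfl
      rw [h1, if_pos (show fwalk F R [] z = some z from rfl)]
      omega
    · have h1 : ((Ext F R).filter fun Y => walk Y [] z = T) = ∅ := by
        apply Finset.filter_false_of_mem; intro Y _; exact h
      rw [h1, if_neg (by simpa [fwalk] using h)]
      simp
  | cons c L ih =>
    intro F R z T hS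
    rw [List.length_cons] at hS
    have hS' : size F + L.length ≤ S := by omega
    by_cases hm : z ∈ F c
    · have hset : ((Ext F R).filter fun Y => walk Y (c :: L) z = T)
          = (Ext F R).filter fun Y => walk Y L (R c z) = T := by
        apply Finset.filter_congr
        intro Y hY
        have hv : Y c z = R c z := mem_Ext.mp hY c z hm
        show (walk Y L (Y c z) = T) ↔ (walk Y L (R c z) = T)
        rw [hv]
      have hfw : fwalk F R (c :: L) z = fwalk F R L (R c z) := by rw [fwalk, if_pos hm]
      rw [hset, hfw]
      have := ih F R (R c z) T hS'
      have hmul : L.length * (Ext F R).card ≤ (c :: L).length * (Ext F R).card :=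
        Nat.mul_le_mul_right _ (by simp [List.length_cons])
      omega
    · -- free step
      have htmem : ∀ {Y : Pair n}, Y ∈ Ext F R → Y c z ∈ ((F c).image (R c))ᶜ :=
        fun hY => fiber_mem_compl hm hY
      have hpart : ∀ s : Finset (Pair n), s ⊆ Ext F R →
          s.card = ∑ q ∈ ((F c).image (R c))ᶜ, (s.filter fun Y => Y c z = q).card := by
        intro s hs
        apply Finset.card_eq_sum_card_fiberwise
        intro Y hY
        exact htmem (hs hY)
      have hfib : ∀ q ∈ ((F c).image (R c))ᶜ,
          (((Ext F R).filter fun Y => walk Y (c :: L) z = T).filter fun Y => Y c z = q)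
          = (Ext (Function.update F c (insert z (F c))) (updR R c z q)).filter
              fun Y => walk Y L q = T := by
        intro q hq
        rw [Ext_insert hm (Finset.mem_compl.mp hq)]
        ext Y
        simp only [Finset.mem_filter]
        constructor
        · rintro ⟨⟨hE, hw⟩, hq'⟩
          refine ⟨⟨hE, hq'⟩, ?_⟩
          have : walk Y (c :: L) z = walk Y L (Y c z) := rfl
          rw [this, hq'] at hw
          exact hw
        · rintro ⟨⟨hE, hq'⟩, hw⟩
          refine ⟨⟨hE, ?_⟩, hq'⟩
          show walk Y L (Y c z) = T
          rw [hq']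
          exact hw
      have hIH : ∀ q ∈ ((F c).image (R c))ᶜ,
          (n - S) * ((Ext (Function.update F c (insert z (F c))) (updR R c z q)).filter
              (fun Y => walk Y L q = T)).card ≤
            L.length * (Ext (Function.update F c (insert z (F c))) (updR R c z q)).card +
            (n - S) * (if fwalk (Function.update F c (insert z (F c))) (updR R c z q) L q
                = some T
              then (Ext (Function.update F c (insert z (F c))) (updR R c z q)).card else 0) := by
        intro q hq
        apply ih
        have := size_update_le F c z
        omega
      have hN : ((Ext F R).filter fun Y => walk Y (c :: L) z = T).card
          = ∑ q ∈ ((F c).image (R c))ᶜ,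
            ((Ext (Function.update F c (insert z (F c))) (updR R c z q)).filter
              (fun Y => walk Y L q = T)).card := by
        rw [hpart _ (Finset.filter_subset _ _)]
        exact Finset.sum_congr rfl fun q hq => by rw [hfib q hq]
      have hEq : ∀ q ∈ ((F c).image (R c))ᶜ,
          (Ext (Function.update F c (insert z (F c))) (updR R c z q)).card
            = ((Ext F R).filter fun Y => Y c z = q).card := by
        intro q hq
        rw [Ext_insert hm (Finset.mem_compl.mp hq)]
      have hE : (Ext F R).card = ∑ q ∈ ((F c).image (R c))ᶜ,
          (Ext (Function.update F c (insert z (F c))) (updR R c z q)).card := by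
        rw [hpart _ (Finset.Subset.refl _)]
        exact Finset.sum_congr rfl fun q hq => (hEq q hq).symm
      -- the indicator sum
      have hind : ∑ q ∈ ((F c).image (R c))ᶜ,
          (n - S) * (if fwalk (Function.update F c (insert z (F c))) (updR R c z q) L q
              = some T
            then (Ext (Function.update F c (insert z (F c))) (updR R c z q)).card else 0)
          ≤ (Ext F R).card := by
        have hstep : ∀ q : Fin n,
            (n - S) * (if fwalk (Function.update F c (insert z (F c))) (updR R c z q) L q
                = some T
              then (Ext (Function.update F c (insert z (F c))) (updR R c z q)).card else 0)
            = (if fwalk (Function.update F c (insert z (F c))) (updR R c z q) L q = some T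
              then (n - S) * (Ext (Function.update F c (insert z (F c))) (updR R c z q)).card
              else 0) := by
          intro q; split_ifs <;> simp
        simp only [hstep]
        rw [← Finset.sum_filter]
        set B := (((F c).image (R c))ᶜ).filter
          (fun q => fwalk (Function.update F c (insert z (F c))) (updR R c z q) L q = some T)
          with hBdef
        rcases Finset.eq_empty_or_nonempty B with hBe | ⟨q0, hq0⟩
        · rw [hBe]; simp
        · have hq0t : q0 ∈ ((F c).image (R c))ᶜ := (Finset.mem_filter.mp hq0).1
          have hq0w := (Finset.mem_filter.mp hq0).2
          have hBsing : B = {q0} := by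
            apply Finset.eq_singleton_iff_unique_mem.mpr
            refine ⟨hq0, fun q hq => ?_⟩
            have hqt : q ∈ ((F c).image (R c))ᶜ := (Finset.mem_filter.mp hq).1
            have hqw := (Finset.mem_filter.mp hq).2
            by_contra hne2
            exact hne2 (key_inj hm (Finset.mem_compl.mp hqt) (Finset.mem_compl.mp hq0t)
              hne2 L q q0 T hqw hq0w)
          rw [hBsing, Finset.sum_singleton]
          have hFcS : (F c).card ≤ S := by
            have : (F c).card ≤ size F := by
              rcases fin2 c with rfl | rfl <;> unfold size <;> omega
            omega
          have htcard : (((F c).image (R c))ᶜ).card = n - (F c).card := by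
            rw [Finset.card_compl, Finset.card_image_of_injective _ (R c).injective,
              Fintype.card_fin]
          have hconst : ∀ q ∈ ((F c).image (R c))ᶜ,
              (Ext (Function.update F c (insert z (F c))) (updR R c z q)).card
              = (Ext (Function.update F c (insert z (F c))) (updR R c z q0)).card := by
            intro q hq
            rw [hEq q hq, hEq q0 hq0t]
            exact card_fiber_eq z (Finset.mem_compl.mp hq) (Finset.mem_compl.mp hq0t)
          have hEconst : (Ext F R).card = (n - (F c).card) *
              (Ext (Function.update F c (insert z (F c))) (updR R c z q0)).card := by
            rw [hE, Finset.sum_congr rfl hconst, Finset.sum_const, htcard, smul_eq_mul]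
          rw [hEconst]
          exact Nat.mul_le_mul_right _ (Nat.sub_le_sub_left hFcS n)
      calc (n - S) * ((Ext F R).filter fun Y => walk Y (c :: L) z = T).card
          = ∑ q ∈ ((F c).image (R c))ᶜ,
            (n - S) * ((Ext (Function.update F c (insert z (F c))) (updR R c z q)).filter
              (fun Y => walk Y L q = T)).card := by rw [hN, Finset.mul_sum]
        _ ≤ ∑ q ∈ ((F c).image (R c))ᶜ,
            (L.length * (Ext (Function.update F c (insert z (F c))) (updR R c z q)).card +
            (n - S) * (if fwalk (Function.update F c (insert z (F c))) (updR R c z q) L q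
                = some T
              then (Ext (Function.update F c (insert z (F c))) (updR R c z q)).card else 0)) :=
            Finset.sum_le_sum hIH
        _ = L.length * (Ext F R).card + ∑ q ∈ ((F c).image (R c))ᶜ,
            (n - S) * (if fwalk (Function.update F c (insert z (F c))) (updR R c z q) L q
                = some T
              then (Ext (Function.update F c (insert z (F c))) (updR R c z q)).card else 0) := by
            rw [Finset.sum_add_distrib, ← Finset.mul_sum, ← hE]
        _ ≤ L.length * (Ext F R).card + (Ext F R).card := by
            exact Nat.add_le_add_left hind _
        _ ≤ (c :: L).length * (Ext F R).card +
            (n - S) * (if fwalk F R (c :: L) z = some T then (Ext F R).card else 0) := by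
            rw [List.length_cons, Nat.succ_mul]
            exact Nat.le_add_right _ _

theorem lemV (S : ℕ) : ∀ (L : List (Fin 2)) (F : Fin 2 → Finset (Fin n)) (R : Pair n)
    (p z : Fin n), size F + L.length ≤ S → (∀ c, p ∉ (F c).image (R c)) →
    (n - S) * ((Ext F R).filter fun Y => p ∈ traj Y L z).card ≤
      L.length * (Ext F R).card := by
  intro L
  induction L with
  | nil =>
    intro F R p z hS hfresh
    have h1 : ((Ext F R).filter fun Y => p ∈ traj Y [] z) = ∅ := by
      apply Finset.filter_false_of_mem; intro Y _; simp [traj]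
    rw [h1]
    simp
  | cons c L ih =>
    intro F R p z hS hfresh
    rw [List.length_cons] at hS
    have hS' : size F + L.length ≤ S := by omega
    by_cases hm : z ∈ F c
    · have hset : ((Ext F R).filter fun Y => p ∈ traj Y (c :: L) z)
          = (Ext F R).filter fun Y => p ∈ traj Y L (R c z) := by
        apply Finset.filter_congr
        intro Y hY
        have hv : Y c z = R c z := mem_Ext.mp hY c z hm
        have hne' : p ≠ Y c z := by
          rw [hv]
          intro he
          exact hfresh c (he ▸ Finset.mem_image_of_mem _ hm)
        show (p ∈ Y c z :: traj Y L (Y c z)) ↔ _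
        rw [List.mem_cons, hv]
        exact or_iff_right (by rw [hv] at hne'; exact hne')
      rw [hset]
      have := ih F R p (R c z) hS' hfresh
      have hmul : L.length * (Ext F R).card ≤ (c :: L).length * (Ext F R).card :=
        Nat.mul_le_mul_right _ (by simp [List.length_cons])
      omega
    · -- free step
      have hpt : p ∈ ((F c).image (R c))ᶜ := Finset.mem_compl.mpr (hfresh c)
      have hpart : ∀ s : Finset (Pair n), s ⊆ Ext F R →
          s.card = ∑ q ∈ ((F c).image (R c))ᶜ, (s.filter fun Y => Y c z = q).card := by
        intro s hs
        apply Finset.card_eq_sum_card_fiberwise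
        intro Y hY
        exact fiber_mem_compl hm (hs hY)
      have hfib : ∀ q ∈ ((F c).image (R c))ᶜ,
          (((Ext F R).filter fun Y => p ∈ traj Y (c :: L) z).filter fun Y => Y c z = q)
          = (Ext (Function.update F c (insert z (F c))) (updR R c z q)).filter
              fun Y => p = q ∨ p ∈ traj Y L q := by
        intro q hq
        rw [Ext_insert hm (Finset.mem_compl.mp hq)]
        ext Y
        simp only [Finset.mem_filter]
        constructor
        · rintro ⟨⟨hE, hw⟩, hq'⟩
          refine ⟨⟨hE, hq'⟩, ?_⟩
          have : p ∈ Y c z :: traj Y L (Y c z) := hw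
          rw [hq'] at this
          exact List.mem_cons.mp this
        · rintro ⟨⟨hE, hq'⟩, hw⟩
          refine ⟨⟨hE, ?_⟩, hq'⟩
          show p ∈ Y c z :: traj Y L (Y c z)
          rw [hq', List.mem_cons]
          exact hw
      have hN : ((Ext F R).filter fun Y => p ∈ traj Y (c :: L) z).card
          = ∑ q ∈ ((F c).image (R c))ᶜ,
            ((Ext (Function.update F c (insert z (F c))) (updR R c z q)).filter
              (fun Y => p = q ∨ p ∈ traj Y L q)).card := by
        rw [hpart _ (Finset.filter_subset _ _)]
        exact Finset.sum_congr rfl fun q hq => by rw [hfib q hq]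
      -- split off q = p
      rw [hN, ← Finset.add_sum_erase _ _ hpt, Nat.mul_add, Finset.mul_sum]
      have hterm_p : (n - S) *
          ((Ext (Function.update F c (insert z (F c))) (updR R c z p)).filter
            (fun Y => p = p ∨ p ∈ traj Y L p)).card ≤ (Ext F R).card := by
        calc (n - S) * ((Ext (Function.update F c (insert z (F c))) (updR R c z p)).filter
            (fun Y => p = p ∨ p ∈ traj Y L p)).card
            ≤ (n - S) * (Ext (Function.update F c (insert z (F c))) (updR R c z p)).card :=
              Nat.mul_le_mul_left _ (Finset.card_filter_le _ _)
          _ ≤ (Ext F R).card := ext_upd_card_bound hm (hfresh c)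
              (le_trans (card_le_size c) (by omega))
      have hterm_rest : ∀ q ∈ (((F c).image (R c))ᶜ).erase p,
          (n - S) * ((Ext (Function.update F c (insert z (F c))) (updR R c z q)).filter
            (fun Y => p = q ∨ p ∈ traj Y L q)).card
          ≤ L.length * (Ext (Function.update F c (insert z (F c))) (updR R c z q)).card := by
        intro q hq
        have hqp : p ≠ q := fun he => (Finset.mem_erase.mp hq).1 he.symm
        have hqt : q ∈ ((F c).image (R c))ᶜ := (Finset.mem_erase.mp hq).2
        have hset2 : ((Ext (Function.update F c (insert z (F c))) (updR R c z q)).filter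
            (fun Y => p = q ∨ p ∈ traj Y L q))
            = ((Ext (Function.update F c (insert z (F c))) (updR R c z q)).filter
            (fun Y => p ∈ traj Y L q)) := by
          apply Finset.filter_congr
          intro Y _
          simp [hqp]
        rw [hset2]
        apply ih
        · have := size_update_le F c z
          omega
        · intro c'
          rcases eq_or_ne c' c with rfl | hcc
          · rw [Function.update_self, image_insert_updR hm (Finset.mem_compl.mp hqt)]
            rw [Finset.mem_insert]
            push_neg
            exact ⟨hqp, hfresh c'⟩
          · rw [Function.update_of_ne hcc]
            have h1 : updR R c z q c' = R c' := updR_other R hcc z q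
            rw [h1]
            exact hfresh c'
      calc (n - S) * ((Ext (Function.update F c (insert z (F c))) (updR R c z p)).filter
            (fun Y => p = p ∨ p ∈ traj Y L p)).card
          + ∑ q ∈ (((F c).image (R c))ᶜ).erase p,
            (n - S) * ((Ext (Function.update F c (insert z (F c))) (updR R c z q)).filter
              (fun Y => p = q ∨ p ∈ traj Y L q)).card
          ≤ (Ext F R).card + ∑ q ∈ (((F c).image (R c))ᶜ).erase p,
            L.length * (Ext (Function.update F c (insert z (F c))) (updR R c z q)).card := by
            exact Nat.add_le_add hterm_p (Finset.sum_le_sum hterm_rest)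
        _ ≤ (Ext F R).card + L.length * (Ext F R).card := by
            apply Nat.add_le_add_left
            rw [← Finset.mul_sum]
            apply Nat.mul_le_mul_left
            calc ∑ q ∈ (((F c).image (R c))ᶜ).erase p,
                (Ext (Function.update F c (insert z (F c))) (updR R c z q)).card
                ≤ ∑ q ∈ ((F c).image (R c))ᶜ,
                  (Ext (Function.update F c (insert z (F c))) (updR R c z q)).card := by
                  apply Finset.sum_le_sum_of_subset
                  exact Finset.erase_subset _ _
              _ = (Ext F R).card := by
                  rw [hpart _ (Finset.Subset.refl _)]
                  exact Finset.sum_congr rfl fun q hq => by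
                    rw [Ext_insert hm (Finset.mem_compl.mp hq)]
        _ = (c :: L).length * (Ext F R).card := by
            rw [List.length_cons, Nat.succ_mul]
            omega

lemma Ext_Fext (X Y : Pair n) : ∀ (L : List (Fin 2)) (F : Fin 2 → Finset (Fin n)) (z : Fin n),
    Y ∈ Ext (Fext X F L z) X ↔ Y ∈ Ext F X ∧ traj Y L z = traj X L z := by
  intro L
  induction L with
  | nil => intro F z; simp [Fext, traj]
  | cons c L ih =>
    intro F z
    show Y ∈ Ext (Fext X (Function.update F c (insert z (F c))) L (X c z)) X ↔ _
    rw [ih, mem_Ext_update]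
    constructor
    · rintro ⟨⟨hE, hv⟩, ht⟩
      refine ⟨hE, ?_⟩
      show Y c z :: traj Y L (Y c z) = X c z :: traj X L (X c z)
      rw [hv, ht]
    · rintro ⟨hE, ht⟩
      have ht' : Y c z :: traj Y L (Y c z) = X c z :: traj X L (X c z) := ht
      obtain ⟨hv, ht2⟩ := List.cons.inj ht'
      rw [hv] at ht2
      exact ⟨⟨hE, hv⟩, ht2⟩

lemma walk_eq_of_traj {X Y : Pair n} : ∀ (L : List (Fin 2)) (z : Fin n),
    traj Y L z = traj X L z → walk Y L z = walk X L z := by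
  intro L
  induction L with
  | nil => intro z _; rfl
  | cons c L ih =>
    intro z h
    have h' : Y c z :: traj Y L (Y c z) = X c z :: traj X L (X c z) := h
    obtain ⟨hv, ht⟩ := List.cons.inj h'
    show walk Y L (Y c z) = walk X L (X c z)
    rw [hv] at ht ⊢
    exact ih _ ht

lemma size_Fext (X : Pair n) : ∀ (L : List (Fin 2)) (F : Fin 2 → Finset (Fin n)) (z : Fin n),
    size (Fext X F L z) ≤ size F + L.length := by
  intro L
  induction L with
  | nil => intro F z; simp [Fext]
  | cons c L ih =>
    intro F z
    have h1 := ih (Function.update F c (insert z (F c))) (X c z)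
    have h2 := size_update_le F c z
    show size (Fext X (Function.update F c (insert z (F c))) L (X c z)) ≤ _
    simp only [List.length_cons]
    omega

lemma mem_Fext (X : Pair n) : ∀ (L : List (Fin 2)) (F : Fin 2 → Finset (Fin n)) (z : Fin n)
    (c : Fin 2) (p : Fin n), p ∈ Fext X F L z c → p ∈ F c ∨ (c, p) ∈ L.zip (z :: traj X L z) := by
  intro L
  induction L with
  | nil => intro F z c p h; exact Or.inl h
  | cons c' L ih =>
    intro F z c p h
    have h' := ih (Function.update F c' (insert z (F c'))) (X c' z) c p h
    have hzip : (c' :: L).zip (z :: traj X (c' :: L) z)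
        = (c', z) :: L.zip (X c' z :: traj X L (X c' z)) := rfl
    rcases h' with hm | hm
    · rcases eq_or_ne c c' with rfl | hcc
      · rw [Function.update_self] at hm
        rcases Finset.mem_insert.mp hm with rfl | hm
        · right; rw [hzip]; exact List.mem_cons_self
        · exact Or.inl hm
      · rw [Function.update_of_ne hcc] at hm
        exact Or.inl hm
    · right; rw [hzip]; exact List.mem_cons_of_mem _ hm

theorem round (uL vL : List (Fin 2)) (hne : uL.head? ≠ vL.head?) (S : ℕ)
    (F : Fin 2 → Finset (Fin n)) (R : Pair n)
    (hS : size F + (uL.length + vL.length) ≤ S)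
    (p : Fin n) (hpF : ∀ c, p ∉ F c) (hpI : ∀ c, p ∉ (F c).image (R c)) :
    (n - S) * ((Ext F R).filter fun Y => walk Y uL p = walk Y vL p).card
      ≤ (uL.length + vL.length) * (Ext F R).card := by
  match uL, vL with
  | [], [] => exact absurd rfl hne
  | [], b :: vL₂ =>
    have hset : ((Ext F R).filter fun Y => walk Y [] p = walk Y (b :: vL₂) p)
        = (Ext F R).filter fun Y => walk Y (b :: vL₂) p = p := by
      apply Finset.filter_congr
      intro Y _
      exact eq_comm
    rw [hset]
    have hW := lemW S (b :: vL₂) F R p p (by simpa using hS)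
    rw [if_neg (by rw [fwalk, if_neg (hpF b)]; simp)] at hW
    calc (n - S) * _ ≤ (b :: vL₂).length * (Ext F R).card + (n - S) * 0 := hW
      _ ≤ ([].length + (b :: vL₂).length) * (Ext F R).card := by
          apply Nat.le_of_eq; rw [Nat.mul_zero, Nat.add_zero, List.length_nil, Nat.zero_add]
  | a :: uL₂, [] =>
    have hW := lemW S (a :: uL₂) F R p p (by rw [List.length_nil, Nat.add_zero] at hS; exact hS)
    rw [if_neg (by rw [fwalk, if_neg (hpF a)]; simp)] at hW
    calc (n - S) * _ ≤ (a :: uL₂).length * (Ext F R).card + (n - S) * 0 := hW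
      _ ≤ ((a :: uL₂).length + [].length) * (Ext F R).card := by
          apply Nat.le_of_eq; rw [Nat.mul_zero, Nat.add_zero, List.length_nil, Nat.add_zero]
  | a :: uL₂, b :: vL₂ =>
    have hab : a ≠ b := by
      intro he
      apply hne
      rw [he]
      rfl
    set uL := a :: uL₂ with huL
    set vL := b :: vL₂ with hvL
    have hSu : ∀ (X : Pair n), size (Fext X F vL p) + uL.length ≤ S := by
      intro X
      have := size_Fext X vL F p
      omega
    have hpart : ∀ s : Finset (Pair n), s ⊆ Ext F R →
        s.card = ∑ τ ∈ (Ext F R).image (fun Y => traj Y vL p),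
          (s.filter fun Y => traj Y vL p = τ).card := by
      intro s hs
      apply Finset.card_eq_sum_card_fiberwise
      intro Y hY
      exact Finset.mem_image_of_mem _ (hs hY)
    have key : ∀ τ ∈ (Ext F R).image (fun Y => traj Y vL p),
        (n - S) * (((Ext F R).filter fun Y => walk Y uL p = walk Y vL p).filter
            fun Y => traj Y vL p = τ).card
        ≤ uL.length * ((Ext F R).filter fun Y => traj Y vL p = τ).card
          + (n - S) * (((Ext F R).filter fun Y => p ∈ traj Y vL p).filter
            fun Y => traj Y vL p = τ).card := by
      intro τ hτ
      obtain ⟨X, hX, hXτ⟩ := Finset.mem_image.mp hτ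
      have hfib : (Ext F R).filter (fun Y => traj Y vL p = τ) = Ext (Fext X F vL p) X := by
        ext Y
        rw [Finset.mem_filter, Ext_Fext, ← Ext_ref hX, ← hXτ]
      have hEvt : ((Ext F R).filter fun Y => walk Y uL p = walk Y vL p).filter
            (fun Y => traj Y vL p = τ)
          = (Ext (Fext X F vL p) X).filter (fun Y => walk Y uL p = walk X vL p) := by
        ext Y
        simp only [Finset.mem_filter]
        rw [Ext_Fext, ← Ext_ref hX, ← hXτ]
        constructor
        · rintro ⟨⟨hY, hw⟩, ht⟩
          rw [walk_eq_of_traj vL p ht] at hw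
          exact ⟨⟨hY, ht⟩, hw⟩
        · rintro ⟨⟨hY, ht⟩, hw⟩
          rw [← walk_eq_of_traj vL p ht] at hw
          exact ⟨⟨hY, hw⟩, ht⟩
      have hW := lemW S uL (Fext X F vL p) X p (walk X vL p) (hSu X)
      rw [hEvt]
      by_cases hcase : fwalk (Fext X F vL p) X uL p = some (walk X vL p)
      · have hmemF : p ∈ Fext X F vL p a := by
          by_contra hno
          rw [huL, fwalk, if_neg hno] at hcase
          simp at hcase
        have hrev : p ∈ traj X vL p := by
          rcases mem_Fext X vL F p a p hmemF with hFa | hzip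
          · exact absurd hFa (hpF a)
          · have hzip' : vL.zip (p :: traj X vL p)
                = (b, p) :: vL₂.zip (traj X vL p) := rfl
            rw [hzip'] at hzip
            rcases List.mem_cons.mp hzip with heq | htail
            · exact absurd (congrArg Prod.fst heq) hab
            · exact (List.of_mem_zip htail).2
        have hsub : Ext (Fext X F vL p) X ⊆
            ((Ext F R).filter fun Y => p ∈ traj Y vL p).filter
              (fun Y => traj Y vL p = τ) := by
          intro Y hY
          rw [Ext_Fext] at hY
          obtain ⟨hY1, hY2⟩ := hY
          rw [← Ext_ref hX] at hY1
          simp only [Finset.mem_filter]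
          exact ⟨⟨hY1, by rw [hY2]; exact hrev⟩, by rw [← hXτ]; exact hY2⟩
        rw [if_pos hcase] at hW
        calc (n - S) * ((Ext (Fext X F vL p) X).filter
              (fun Y => walk Y uL p = walk X vL p)).card
            ≤ uL.length * (Ext (Fext X F vL p) X).card
              + (n - S) * (Ext (Fext X F vL p) X).card := hW
          _ ≤ uL.length * ((Ext F R).filter fun Y => traj Y vL p = τ).card
              + (n - S) * (((Ext F R).filter fun Y => p ∈ traj Y vL p).filter
                (fun Y => traj Y vL p = τ)).card := by
              rw [hfib]
              exact Nat.add_le_add_left (Nat.mul_le_mul_left _ (Finset.card_le_card hsub)) _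
      · rw [if_neg hcase, Nat.mul_zero, Nat.add_zero] at hW
        calc (n - S) * ((Ext (Fext X F vL p) X).filter
              (fun Y => walk Y uL p = walk X vL p)).card
            ≤ uL.length * (Ext (Fext X F vL p) X).card := hW
          _ ≤ _ := by
              rw [hfib]
              exact Nat.le_add_right _ _
    calc (n - S) * ((Ext F R).filter fun Y => walk Y uL p = walk Y vL p).card
        = ∑ τ ∈ (Ext F R).image (fun Y => traj Y vL p),
          (n - S) * (((Ext F R).filter fun Y => walk Y uL p = walk Y vL p).filter
            fun Y => traj Y vL p = τ).card := by
          rw [← Finset.mul_sum, ← hpart _ (Finset.filter_subset _ _)]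
      _ ≤ ∑ τ ∈ (Ext F R).image (fun Y => traj Y vL p),
          (uL.length * ((Ext F R).filter fun Y => traj Y vL p = τ).card
          + (n - S) * (((Ext F R).filter fun Y => p ∈ traj Y vL p).filter
            fun Y => traj Y vL p = τ).card) := Finset.sum_le_sum key
      _ = uL.length * (Ext F R).card
          + (n - S) * ((Ext F R).filter fun Y => p ∈ traj Y vL p).card := by
          rw [Finset.sum_add_distrib, ← Finset.mul_sum, ← Finset.mul_sum,
            ← hpart _ (Finset.Subset.refl _), ← hpart _ (Finset.filter_subset _ _)]
      _ ≤ uL.length * (Ext F R).card + vL.length * (Ext F R).card := by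
          apply Nat.add_le_add_left
          apply lemV S vL F R p p (by omega) hpI
      _ = (uL.length + vL.length) * (Ext F R).card := by rw [Nat.add_mul]

theorem main (uL vL : List (Fin 2)) (hne : uL.head? ≠ vL.head?) (k : ℕ)
    (hk : 2 * (k * (uL.length + vL.length)) ≤ n) :
    ∀ j, j ≤ k → ∀ (F : Fin 2 → Finset (Fin n)) (R : Pair n),
    size F ≤ (k - j) * (uL.length + vL.length) →
    (((Ext F R).filter fun Y => ∀ z, walk Y uL z = walk Y vL z).card : ℝ)
      ≤ ((2 * (uL.length + vL.length) : ℝ) / n) ^ j * (Ext F R).card := by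
  have hc0 : (0 : ℝ) ≤ (2 * (uL.length + vL.length) : ℝ) / n :=
    div_nonneg (by positivity) (Nat.cast_nonneg n)
  have hℓ1 : 1 ≤ uL.length + vL.length := by
    rcases uL with _ | ⟨a, uL₂⟩
    · rcases vL with _ | ⟨b, vL₂⟩
      · exact absurd rfl hne
      · simp
    · simp [Nat.succ_add]
  intro j
  induction j with
  | zero =>
    intro _ F R hF
    rw [pow_zero, one_mul]
    exact Nat.cast_le.mpr (Finset.card_filter_le _ _)
  | succ j ih =>
    intro hjk F R hF
    have hjk' : j ≤ k := by omega
    have hk1 : 1 ≤ k := by omega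
    set ℓn := uL.length + vL.length with hlndef
    -- find a fresh point p
    have hsz : 2 * size F + 2 * ℓn ≤ n := by
      have h1 : (k - (j+1)) * ℓn ≤ (k - 1) * ℓn := Nat.mul_le_mul_right _ (by omega)
      have h2 : (k - 1) * ℓn + ℓn = k * ℓn := by
        rw [← Nat.succ_mul, Nat.succ_eq_add_one, Nat.sub_add_cancel hk1]
      have h3 : size F ≤ (k - 1) * ℓn := le_trans hF h1
      omega
    have hnpos : 0 < n := by omega
    set bad := (F 0 ∪ F 1) ∪ ((F 0).image (R 0) ∪ (F 1).image (R 1)) with hbaddef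
    have hbadcard : bad.card < n := by
      have h1 := Finset.card_union_le (F 0 ∪ F 1) ((F 0).image (R 0) ∪ (F 1).image (R 1))
      have h2 := Finset.card_union_le (F 0) (F 1)
      have h3 := Finset.card_union_le ((F 0).image (R 0)) ((F 1).image (R 1))
      have h4 := Finset.card_image_le (s := F 0) (f := R 0)
      have h5 := Finset.card_image_le (s := F 1) (f := R 1)
      have h6 : size F = (F 0).card + (F 1).card := rfl
      have h0 : bad.card
          = ((F 0 ∪ F 1) ∪ ((F 0).image (R 0) ∪ (F 1).image (R 1))).card := by
        rw [hbaddef]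
      omega
    obtain ⟨p, hp⟩ : ∃ p : Fin n, p ∉ bad := by
      have : 0 < (badᶜ : Finset (Fin n)).card := by
        rw [Finset.card_compl, Fintype.card_fin]
        omega
      obtain ⟨p, hp⟩ := Finset.card_pos.mp this
      exact ⟨p, Finset.mem_compl.mp hp⟩
    have hpF : ∀ c, p ∉ F c := by
      intro c hc
      apply hp
      rw [hbaddef]
      rcases fin2 c with rfl | rfl
      · exact Finset.mem_union_left _ (Finset.mem_union_left _ hc)
      · exact Finset.mem_union_left _ (Finset.mem_union_right _ hc)
    have hpI : ∀ c, p ∉ (F c).image (R c) := by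
      intro c hc
      apply hp
      rw [hbaddef]
      rcases fin2 c with rfl | rfl
      · exact Finset.mem_union_right _ (Finset.mem_union_left _ hc)
      · exact Finset.mem_union_right _ (Finset.mem_union_right _ hc)
    -- fibering by the transcript of the round at p
    have hpart : ∀ s : Finset (Pair n), s ⊆ Ext F R →
        s.card = ∑ τ ∈ (Ext F R).image (fun Y => (traj Y uL p, traj Y vL p)),
          (s.filter fun Y => (traj Y uL p, traj Y vL p) = τ).card := by
      intro s hs
      apply Finset.card_eq_sum_card_fiberwise
      intro Y hY
      exact Finset.mem_image_of_mem _ (hs hY)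
    have keyfib : ∀ τ ∈ (Ext F R).image (fun Y => (traj Y uL p, traj Y vL p)),
        ((((Ext F R).filter fun Y => ∀ z, walk Y uL z = walk Y vL z).filter
            fun Y => (traj Y uL p, traj Y vL p) = τ).card : ℝ)
        ≤ ((2 * (uL.length + vL.length) : ℝ) / n) ^ j *
          (((Ext F R).filter fun Y => walk Y uL p = walk Y vL p).filter
            fun Y => (traj Y uL p, traj Y vL p) = τ).card := by
      intro τ hτ
      obtain ⟨X, hX, hXτ⟩ := Finset.mem_image.mp hτ
      have hfib : (Ext F R).filter (fun Y => (traj Y uL p, traj Y vL p) = τ)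
          = Ext (Fext X (Fext X F uL p) vL p) X := by
        ext Y
        rw [Finset.mem_filter, Ext_Fext, Ext_Fext, ← Ext_ref hX, ← hXτ, Prod.mk.injEq]
        constructor
        · rintro ⟨hY, h1, h2⟩; exact ⟨⟨hY, h1⟩, h2⟩
        · rintro ⟨⟨hY, h1⟩, h2⟩; exact ⟨hY, h1, h2⟩
      have hmemfib : ∀ Y, Y ∈ Ext (Fext X (Fext X F uL p) vL p) X →
          Y ∈ Ext F R ∧ traj Y uL p = traj X uL p ∧ traj Y vL p = traj X vL p := by
        intro Y hY
        have : Y ∈ (Ext F R).filter (fun Y => (traj Y uL p, traj Y vL p) = τ) := by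
          rw [hfib]; exact hY
        rw [Finset.mem_filter, ← hXτ, Prod.mk.injEq] at this
        exact ⟨this.1, this.2.1, this.2.2⟩
      by_cases hclose : walk X uL p = walk X vL p
      · -- closing fiber : apply the inductive hypothesis on the extended data
        have hsize2 : size (Fext X (Fext X F uL p) vL p) ≤ (k - j) * ℓn := by
          have h1 := size_Fext X vL (Fext X F uL p) p
          have h2 := size_Fext X uL F p
          have h3 : (k - (j+1)) * ℓn + ℓn = (k - j) * ℓn := by
            rw [← Nat.succ_mul, Nat.succ_eq_add_one, show k - (j+1) + 1 = k - j by omega]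
          omega
        have hIH := ih hjk' (Fext X (Fext X F uL p) vL p) X hsize2
        have hsub1 : (((Ext F R).filter fun Y => ∀ z, walk Y uL z = walk Y vL z).filter
            fun Y => (traj Y uL p, traj Y vL p) = τ)
            = ((Ext (Fext X (Fext X F uL p) vL p) X).filter
              fun Y => ∀ z, walk Y uL z = walk Y vL z) := by
          ext Y
          simp only [Finset.mem_filter]
          constructor
          · rintro ⟨⟨hY, hsol⟩, ht⟩
            refine ⟨?_, hsol⟩
            have hmem : Y ∈ (Ext F R).filter (fun Y => (traj Y uL p, traj Y vL p) = τ) :=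
              Finset.mem_filter.mpr ⟨hY, ht⟩
            rw [hfib] at hmem
            exact hmem
          · rintro ⟨hY, hsol⟩
            obtain ⟨hY1, ht1, ht2⟩ := hmemfib Y hY
            refine ⟨⟨hY1, hsol⟩, ?_⟩
            rw [← hXτ, Prod.mk.injEq]
            exact ⟨ht1, ht2⟩
        have hsub2 : (((Ext F R).filter fun Y => walk Y uL p = walk Y vL p).filter
            fun Y => (traj Y uL p, traj Y vL p) = τ)
            = Ext (Fext X (Fext X F uL p) vL p) X := by
          rw [← hfib]
          ext Y
          simp only [Finset.mem_filter]
          constructor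
          · rintro ⟨⟨hY, _⟩, ht⟩
            exact ⟨hY, ht⟩
          · rintro ⟨hY, ht⟩
            rw [← hXτ, Prod.mk.injEq] at ht
            refine ⟨⟨hY, ?_⟩, by rw [← hXτ, Prod.mk.injEq]; exact ht⟩
            rw [walk_eq_of_traj uL p ht.1, walk_eq_of_traj vL p ht.2]
            exact hclose
        rw [hsub1, hsub2]
        exact hIH
      · -- non-closing fiber: empty intersection with the solution set
        have hempty : (((Ext F R).filter fun Y => ∀ z, walk Y uL z = walk Y vL z).filter
            fun Y => (traj Y uL p, traj Y vL p) = τ) = ∅ := by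
          apply Finset.filter_false_of_mem
          intro Y hY
          rw [← hXτ, Prod.mk.injEq]
          rintro ⟨h1, h2⟩
          apply hclose
          rw [← walk_eq_of_traj uL p h1, ← walk_eq_of_traj vL p h2]
          exact (Finset.mem_filter.mp hY).2 p
        rw [hempty]
        simp only [Finset.card_empty, Nat.cast_zero]
        positivity
    -- assemble
    have hEp := round uL vL hne (size F + ℓn) F R (by omega) p hpF hpI
    have hden : 2 * (size F + ℓn) ≤ n := by omega
    have hdenpos : 0 < n - (size F + ℓn) := by omega
    have hEpR : (((Ext F R).filter fun Y => walk Y uL p = walk Y vL p).card : ℝ)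
        ≤ ((2 * (uL.length + vL.length) : ℝ) / n) * (Ext F R).card := by
      have hcast : ((n - (size F + ℓn) : ℕ) : ℝ) *
          (((Ext F R).filter fun Y => walk Y uL p = walk Y vL p).card : ℝ)
          ≤ (ℓn : ℝ) * (Ext F R).card := by
        exact_mod_cast hEp
      have hn2 : (n : ℝ) ≤ 2 * ((n - (size F + ℓn) : ℕ) : ℝ) := by
        have : n ≤ 2 * (n - (size F + ℓn)) := by omega
        exact_mod_cast this
      rw [div_mul_eq_mul_div, le_div_iff₀ (by exact_mod_cast hnpos)]
      calc (((Ext F R).filter fun Y => walk Y uL p = walk Y vL p).card : ℝ) * n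
          ≤ (((Ext F R).filter fun Y => walk Y uL p = walk Y vL p).card : ℝ) *
            (2 * ((n - (size F + ℓn) : ℕ) : ℝ)) := by
            apply mul_le_mul_of_nonneg_left hn2 (Nat.cast_nonneg _)
        _ = 2 * (((n - (size F + ℓn) : ℕ) : ℝ) *
            (((Ext F R).filter fun Y => walk Y uL p = walk Y vL p).card : ℝ)) := by ring
        _ ≤ 2 * ((ℓn : ℝ) * (Ext F R).card) := by
            apply mul_le_mul_of_nonneg_left hcast (by norm_num)
        _ = 2 * ((uL.length : ℝ) + (vL.length : ℝ)) * (Ext F R).card := by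
            rw [hlndef]; push_cast; ring
    calc (((Ext F R).filter fun Y => ∀ z, walk Y uL z = walk Y vL z).card : ℝ)
        = ∑ τ ∈ (Ext F R).image (fun Y => (traj Y uL p, traj Y vL p)),
          ((((Ext F R).filter fun Y => ∀ z, walk Y uL z = walk Y vL z).filter
            fun Y => (traj Y uL p, traj Y vL p) = τ).card : ℝ) := by
          rw [hpart _ (Finset.filter_subset _ _), Nat.cast_sum]
      _ ≤ ∑ τ ∈ (Ext F R).image (fun Y => (traj Y uL p, traj Y vL p)),
          ((2 * (uL.length + vL.length) : ℝ) / n) ^ j *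
          ((((Ext F R).filter fun Y => walk Y uL p = walk Y vL p).filter
            fun Y => (traj Y uL p, traj Y vL p) = τ).card : ℝ) := Finset.sum_le_sum keyfib
      _ = ((2 * (uL.length + vL.length) : ℝ) / n) ^ j *
          (((Ext F R).filter fun Y => walk Y uL p = walk Y vL p).card : ℝ) := by
          rw [← Finset.mul_sum, ← Nat.cast_sum,
            ← hpart _ (Finset.filter_subset _ _)]
      _ ≤ ((2 * (uL.length + vL.length) : ℝ) / n) ^ j * (((2 * (uL.length + vL.length) : ℝ) / n) * (Ext F R).card) := by
          apply mul_le_mul_of_nonneg_left hEpR (pow_nonneg hc0 j)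
      _ = ((2 * (uL.length + vL.length) : ℝ) / n) ^ (j + 1) * (Ext F R).card := by
          rw [pow_succ]; ring

lemma prod_map_walk (X : Pair n) : ∀ (l : List (Fin 2)) (z : Fin n),
    ((l.map X).prod) z = walk X l.reverse z := by
  intro l
  induction l with
  | nil => intro z; rfl
  | cons c t ih =>
    intro z
    rw [List.map_cons, List.prod_cons, List.reverse_cons, walk_append,
      Equiv.Perm.mul_apply, ih]
    rfl

lemma walk_surj (X : Pair n) (s : List (Fin 2)) :
    Function.Surjective (fun z => walk X s z) := by
  intro w
  obtain ⟨z, hz⟩ := ((s.reverse.map X).prod).surjective w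
  refine ⟨z, ?_⟩
  have h := prod_map_walk X s.reverse z
  rw [List.reverse_reverse] at h
  show walk X s z = w
  rw [← h]
  exact hz

lemma lcp {α : Type*} : ∀ (l1 l2 : List α), l1 ≠ l2 →
    ∃ s t1 t2, l1 = s ++ t1 ∧ l2 = s ++ t2 ∧ t1.head? ≠ t2.head? := by
  intro l1
  induction l1 with
  | nil =>
    intro l2 h
    refine ⟨[], [], l2, rfl, rfl, ?_⟩
    cases l2 with
    | nil => exact absurd rfl h
    | cons b t => simp
  | cons a t1 ih =>
    intro l2 h
    cases l2 with
    | nil => exact ⟨[], a :: t1, [], rfl, rfl, by simp⟩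
    | cons b t2 =>
      by_cases hab : a = b
      · subst hab
        have ht : t1 ≠ t2 := fun he => h (by rw [he])
        obtain ⟨s, r1, r2, e1, e2, hr⟩ := ih t2 ht
        exact ⟨a :: s, r1, r2, by rw [List.cons_append, ← e1], by rw [List.cons_append, ← e2],
          hr⟩
      · exact ⟨[], a :: t1, b :: t2, rfl, rfl, by simp [hab]⟩

end WSP

open WSP in
theorem word_satisfaction_probability (u v : FreeMonoid (Fin 2)) (huv : u ≠ v)
    (n : ℕ) (hn : 2 * (u.length + v.length) ≤ n) :
    (Nat.card {p : Perm (Fin n) × Perm (Fin n) //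
          FreeMonoid.lift ![p.1, p.2] u = FreeMonoid.lift ![p.1, p.2] v} : ℝ) /
        ((n ! : ℝ)) ^ 2 ≤
      ((2 * (u.length + v.length) : ℝ) / (n : ℝ)) ^ (n / (2 * (u.length + v.length))) := by
  classical
  obtain ⟨s, t1, t2, he1, he2, hhead⟩ := lcp (u.toList.reverse) (v.toList.reverse)
    (fun h => huv (FreeMonoid.toList.injective (List.reverse_injective h)))
  set ℓ := u.length + v.length with hldef
  set ℓ₁ := t1.length + t2.length with hl1def
  have hlu : u.length = s.length + t1.length := by
    have : u.toList.reverse.length = (s ++ t1).length := by rw [he1]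
    simpa [FreeMonoid.length] using this
  have hlv : v.length = s.length + t2.length := by
    have : v.toList.reverse.length = (s ++ t2).length := by rw [he2]
    simpa [FreeMonoid.length] using this
  have hl1le : ℓ₁ ≤ ℓ := by omega
  have hl1pos : 1 ≤ ℓ₁ := by
    rcases t1 with _ | ⟨a, r⟩
    · rcases t2 with _ | ⟨b, r2⟩
      · exact absurd rfl hhead
      · simp [hl1def]
    · simp [hl1def]
      omega
  have hn2 : 2 ≤ n := by omega
  have hnR : (0 : ℝ) < n := by exact_mod_cast Nat.lt_of_lt_of_le (by norm_num) hn2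
  -- the equivalence with the function-pair counting problem
  have hcond : ∀ X : Pair n, (FreeMonoid.lift X u = FreeMonoid.lift X v)
      ↔ (∀ z, walk X t1 z = walk X t2 z) := by
    intro X
    rw [Equiv.ext_iff]
    have hu : ∀ z, (FreeMonoid.lift X u) z = walk X t1 (walk X s z) := by
      intro z
      rw [FreeMonoid.lift_apply, prod_map_walk, he1, walk_append]
    have hv : ∀ z, (FreeMonoid.lift X v) z = walk X t2 (walk X s z) := by
      intro z
      rw [FreeMonoid.lift_apply, prod_map_walk, he2, walk_append]
    constructor
    · intro h w
      obtain ⟨z, hz⟩ := walk_surj X s w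
      simp only at hz
      rw [← hz, ← hu z, ← hv z]
      exact h z
    · intro h z
      rw [hu z, hv z]
      exact h _
  have hcard : (Nat.card {p : Perm (Fin n) × Perm (Fin n) //
          FreeMonoid.lift ![p.1, p.2] u = FreeMonoid.lift ![p.1, p.2] v})
      = ((Finset.univ : Finset (Pair n)).filter
          fun X => ∀ z, walk X t1 z = walk X t2 z).card := by
    have e : {p : Perm (Fin n) × Perm (Fin n) //
        FreeMonoid.lift ![p.1, p.2] u = FreeMonoid.lift ![p.1, p.2] v}
        ≃ {X : Pair n // ∀ z, walk X t1 z = walk X t2 z} := by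
      refine Equiv.subtypeEquiv (piFinTwoEquiv fun _ => Perm (Fin n)).symm ?_
      intro p
      have hXp : (piFinTwoEquiv fun _ => Perm (Fin n)).symm p = ![p.1, p.2] := by
        funext i; fin_cases i <;> rfl
      rw [hXp, ← hcond ![p.1, p.2]]
    rw [Nat.card_congr e, Nat.card_eq_fintype_card, Fintype.card_subtype]
  -- apply the main estimate
  set k₁ := n / (2 * ℓ₁) with hk1def
  have hk1 : 2 * (k₁ * ℓ₁) ≤ n := by
    have h := Nat.div_mul_le_self n (2 * ℓ₁)
    calc 2 * (k₁ * ℓ₁) = k₁ * (2 * ℓ₁) := by ring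
      _ ≤ n := h
  have hmain := main t1 t2 hhead k₁ hk1 k₁ le_rfl (fun _ => (∅ : Finset (Fin n)))
    (fun _ => 1) (by simp [WSP.size])
  have hExtU : WSP.Ext (fun _ => (∅ : Finset (Fin n))) (fun _ => 1) = (Finset.univ : Finset (Pair n)) := by
    ext Y; simp [WSP.Ext]
  have hExtUcard : ((WSP.Ext (fun _ => (∅ : Finset (Fin n))) (fun _ => (1 : Perm (Fin n)))).card : ℝ)
      = ((n ! : ℝ)) ^ 2 := by
    rw [hExtU]
    rw [Finset.card_univ, Fintype.card_fun, Fintype.card_perm, Fintype.card_fin,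
      Fintype.card_fin]
    push_cast
    ring
  rw [hExtU] at hmain
  rw [hcard]
  have hfac : (0 : ℝ) < ((n ! : ℝ)) ^ 2 := by positivity
  rw [div_le_iff₀ hfac]
  have hfilter : (((Finset.univ : Finset (Pair n)).filter
      fun X => ∀ z, walk X t1 z = walk X t2 z).card : ℝ)
      ≤ ((2 * (t1.length + t2.length) : ℝ) / n) ^ k₁ * ((n ! : ℝ)) ^ 2 := by
    calc (((Finset.univ : Finset (Pair n)).filter
        fun X => ∀ z, walk X t1 z = walk X t2 z).card : ℝ)
        ≤ ((2 * (t1.length + t2.length) : ℝ) / n) ^ k₁ *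
          ((Finset.univ : Finset (Pair n)).card : ℝ) := hmain
      _ = ((2 * (t1.length + t2.length) : ℝ) / n) ^ k₁ * ((n ! : ℝ)) ^ 2 := by
          rw [← hExtU, hExtUcard]
  refine le_trans hfilter ?_
  apply mul_le_mul_of_nonneg_right _ (le_of_lt hfac)
  -- compare the two powers
  have hbase1 : (0 : ℝ) ≤ (2 * (t1.length + t2.length) : ℝ) / n :=
    div_nonneg (by positivity) (le_of_lt hnR)
  have hbase2 : ((2 * (t1.length + t2.length) : ℝ) / n) ≤ (2 * (u.length + v.length) : ℝ) / n := by
    gcongr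
    · exact_mod_cast (show t1.length ≤ u.length by omega)
    · exact_mod_cast (show t2.length ≤ v.length by omega)
  have hb1le1 : ((2 * (t1.length + t2.length) : ℝ) / n) ≤ 1 := by
    rw [div_le_one hnR]
    have : (2 * ℓ₁ : ℕ) ≤ n := by omega
    exact_mod_cast this
  have hk_le : n / (2 * ℓ) ≤ k₁ := by
    rw [hk1def]
    exact Nat.div_le_div_left (by omega) (by omega)
  calc ((2 * (t1.length + t2.length) : ℝ) / n) ^ k₁
      ≤ ((2 * (t1.length + t2.length) : ℝ) / n) ^ (n / (2 * ℓ)) :=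
        pow_le_pow_of_le_one hbase1 hb1le1 hk_le
    _ ≤ ((2 * (u.length + v.length) : ℝ) / n) ^ (n / (2 * ℓ)) :=
        pow_le_pow_left₀ hbase1 hbase2 _
end

section
/- Let G be a finite group and M a subgroup of G. The number of pairs (x,y) ∈ G × G such that x and y both lie in some common conjugate gMg⁻¹ of M is at most |G|·|M|; equivalently, the probability that two independent uniformly random elements of G lie in a common conjugate of M is at most 1/[G : M]. -/
theorem pairs_in_common_conjugate_bound {G : Type*} [Group G] [Fintype G]
    (M : Subgroup G) :
    Nat.card {p : G × G // ∃ g : G, g⁻¹ * p.1 * g ∈ M ∧ g⁻¹ * p.2 * g ∈ M} ≤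
        Nat.card G * Nat.card M ∧
      (Nat.card {p : G × G // ∃ g : G, g⁻¹ * p.1 * g ∈ M ∧ g⁻¹ * p.2 * g ∈ M} : ℝ) /
          (Nat.card G : ℝ) ^ 2 ≤ 1 / (M.index : ℝ) := by
  set N := Subgroup.normalizer (M : Set G) with hN
  -- the surjection
  have hsurj : Function.Surjective (fun t : (G ⧸ N) × M × M =>
      (⟨((t.1.out * t.2.1 * t.1.out⁻¹ : G), (t.1.out * t.2.2 * t.1.out⁻¹ : G)),
        ⟨t.1.out, by
          constructor <;> · simp [mul_assoc]⟩⟩ :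
        {p : G × G // ∃ g : G, g⁻¹ * p.1 * g ∈ M ∧ g⁻¹ * p.2 * g ∈ M})) := by
    rintro ⟨⟨x, y⟩, g, hx, hy⟩
    set h := (QuotientGroup.mk g : G ⧸ N).out with hh
    have hmem : h⁻¹ * g ∈ N := by
      have : (QuotientGroup.mk h : G ⧸ N) = QuotientGroup.mk g := by
        rw [hh]; exact Quotient.out_eq _
      exact (QuotientGroup.eq).mp this
    set n := h⁻¹ * g with hn
    have hx' : n * (g⁻¹ * x * g) * n⁻¹ ∈ M :=
      (Subgroup.mem_normalizer_iff.mp hmem _).mp hx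
    have hy' : n * (g⁻¹ * y * g) * n⁻¹ ∈ M :=
      (Subgroup.mem_normalizer_iff.mp hmem _).mp hy
    refine ⟨⟨QuotientGroup.mk g, ⟨_, hx'⟩, ⟨_, hy'⟩⟩, ?_⟩
    apply Subtype.ext
    have e1 : h * (n * (g⁻¹ * x * g) * n⁻¹) * h⁻¹ = x := by rw [hn]; group
    have e2 : h * (n * (g⁻¹ * y * g) * n⁻¹) * h⁻¹ = y := by rw [hn]; group
    simp only [← hh]
    exact Prod.ext e1 e2
  have h1 : Nat.card {p : G × G // ∃ g : G, g⁻¹ * p.1 * g ∈ M ∧ g⁻¹ * p.2 * g ∈ M} ≤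
      Nat.card G * Nat.card M := by
    calc Nat.card {p : G × G // ∃ g : G, g⁻¹ * p.1 * g ∈ M ∧ g⁻¹ * p.2 * g ∈ M}
        ≤ Nat.card ((G ⧸ N) × M × M) := Nat.card_le_card_of_surjective _ hsurj
      _ = N.index * (Nat.card M * Nat.card M) := by
          simp [Nat.card_prod, Subgroup.index]
      _ ≤ M.index * (Nat.card M * Nat.card M) := by
          have hdvd : N.index ∣ M.index :=
            Subgroup.index_dvd_of_le M.le_normalizer
          have hne : M.index ≠ 0 := Subgroup.index_ne_zero_of_finite
          exact Nat.mul_le_mul_right _ (Nat.le_of_dvd (Nat.pos_of_ne_zero hne) hdvd)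
      _ = (M.index * Nat.card M) * Nat.card M := by ring
      _ = Nat.card G * Nat.card M := by rw [Subgroup.index_mul_card]
  refine ⟨h1, ?_⟩
  have hne : M.index ≠ 0 := Subgroup.index_ne_zero_of_finite
  have hGpos : 0 < Nat.card G := Nat.card_pos
  have key : Nat.card {p : G × G // ∃ g : G, g⁻¹ * p.1 * g ∈ M ∧ g⁻¹ * p.2 * g ∈ M} *
      M.index ≤ Nat.card G * Nat.card G := by
    calc Nat.card {p : G × G // ∃ g : G, g⁻¹ * p.1 * g ∈ M ∧ g⁻¹ * p.2 * g ∈ M} * M.index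
        ≤ (Nat.card G * Nat.card M) * M.index := Nat.mul_le_mul_right _ h1
      _ = Nat.card G * (M.index * Nat.card M) := by ring
      _ = Nat.card G * Nat.card G := by rw [Subgroup.index_mul_card]
  rw [div_le_div_iff₀ (by positivity) (by positivity)]
  have : ((Nat.card {p : G × G // ∃ g : G, g⁻¹ * p.1 * g ∈ M ∧ g⁻¹ * p.2 * g ∈ M} *
      M.index : ℕ) : ℝ) ≤ ((Nat.card G * Nat.card G : ℕ) : ℝ) := by exact_mod_cast key
  push_cast at this
  nlinarith [this]
end

section
/- Let u and v be distinct positive words in two letters, let ℓ = ℓ(u) + ℓ(v) be the sum of their lengths, and let n > ℓ. Fix a point ω ∈ {1,…,n}. If x and y are independent uniformly random elements of the symmetric group S_n, then the probability that the permutation u(x,y)·v(x,y)⁻¹ fixes ω is at most ℓ/(n − ℓ). -/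
open Equiv Nat Finset

noncomputable section
namespace FPB

attribute [local instance] Classical.propDecidable

variable {n : ℕ}

abbrev G2 (n : ℕ) := Equiv.Perm (Fin n) × Equiv.Perm (Fin n)

def pg (g : G2 n) : Fin 2 → Equiv.Perm (Fin n) := ![g.1, g.2]

def posF (g : G2 n) (p : Fin n) (l : List (Fin 2)) : Fin n :=
  l.foldl (fun q i => (pg g i)⁻¹ q) p

@[simp] lemma posF_nil (g : G2 n) (p : Fin n) : posF g p [] = p := rfl

@[simp] lemma posF_cons (g : G2 n) (p : Fin n) (a : Fin 2) (l : List (Fin 2)) :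
    posF g p (a :: l) = posF g ((pg g a)⁻¹ p) l := rfl

lemma posF_append (g : G2 n) (p : Fin n) (l₁ l₂ : List (Fin 2)) :
    posF g p (l₁ ++ l₂) = posF g (posF g p l₁) l₂ := by
  simp [posF, List.foldl_append]

lemma posF_lift (g : G2 n) (p : Fin n) (l : List (Fin 2)) :
    posF g p l = (FreeMonoid.lift (pg g) (FreeMonoid.ofList l))⁻¹ p := by
  induction l generalizing p with
  | nil =>
      have h1 : FreeMonoid.ofList ([] : List (Fin 2)) = 1 := rfl
      simp [h1]
  | cons a l ih =>
      rw [posF_cons, ih]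
      have h1 : FreeMonoid.ofList (a :: l) = FreeMonoid.of a * FreeMonoid.ofList l := rfl
      rw [h1, map_mul, mul_inv_rev]
      simp

@[simp] lemma posF_singleton (g : G2 n) (p : Fin n) (a : Fin 2) :
    posF g p [a] = (pg g a)⁻¹ p := rfl

section Core

variable (v u : List (Fin 2)) (ω : Fin n)

/-- letter of step `k` (0-indexed); steps `0..v.length-1` are the `v`-walk,
steps `v.length..` the `u`-walk. -/
def lett (k : ℕ) : Fin 2 := (v ++ u).getD k 0

/-- the point at which step `k` queries (the walk position before step `k`). -/
def argw (g : G2 n) (k : ℕ) : Fin n :=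
  if k < v.length then posF g ω (v.take k) else posF g ω (u.take (k - v.length))

/-- the value revealed by step `k` (the walk position after step `k`). -/
def valw (g : G2 n) (k : ℕ) : Fin n :=
  if k < v.length then posF g ω (v.take (k+1)) else posF g ω (u.take (k - v.length + 1))

lemma take_succ_getD {l : List (Fin 2)} {k : ℕ} (h : k < l.length) :
    l.take (k+1) = l.take k ++ [l.getD k 0] := by
  rw [List.take_succ, List.getD_eq_getElem l 0 h, List.getElem?_eq_getElem h]
  rfl

lemma lett_lt (k : ℕ) (h : k < v.length) : lett v u k = v.getD k 0 := by
  unfold lett; rw [List.getD_append _ _ _ _ h]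

lemma lett_ge (k : ℕ) (h : v.length ≤ k) : lett v u k = u.getD (k - v.length) 0 := by
  unfold lett
  rw [List.getD_eq_getElem?_getD, List.getElem?_append_right h,
    List.getD_eq_getElem?_getD]

lemma valw_eq (g : G2 n) (k : ℕ) (hk : k < v.length + u.length) :
    valw v u ω g k = (pg g (lett v u k))⁻¹ (argw v u ω g k) := by
  rcases Nat.lt_or_ge k v.length with h | h
  · rw [valw, if_pos h, argw, if_pos h, lett_lt _ _ _ h,
      take_succ_getD h, posF_append]
    simp
  · have hku : k - v.length < u.length := by omega
    rw [valw, if_neg (by omega), argw, if_neg (by omega), lett_ge _ _ _ h,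
      take_succ_getD hku, posF_append]
    simp

@[simp] lemma argw_zero (g : G2 n) : argw v u ω g 0 = ω := by
  unfold argw; split <;> simp

lemma argw_t (g : G2 n) : argw v u ω g v.length = ω := by
  unfold argw; rw [if_neg (lt_irrefl _)]; simp

lemma argw_succ (g : G2 n) (j : ℕ) (hne : j + 1 ≠ v.length) :
    argw v u ω g (j+1) = valw v u ω g j := by
  rcases Nat.lt_or_ge (j+1) v.length with h | h
  · rw [argw, if_pos h, valw, if_pos (by omega)]
  · have hj : v.length ≤ j := by omega
    rw [argw, if_neg (by omega), valw, if_neg (by omega)]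
    congr 2
    omega

end Core
section Core2

variable (v u : List (Fin 2)) (ω : Fin n)

def swapComp (g : G2 n) (i : Fin 2) (σ : Equiv.Perm (Fin n)) : G2 n :=
  if i = 0 then (g.1 * σ, g.2) else (g.1, g.2 * σ)

lemma pg_swapComp_same (g : G2 n) (i : Fin 2) (σ : Equiv.Perm (Fin n)) :
    pg (swapComp g i σ) i = pg g i * σ := by
  fin_cases i <;> simp [pg, swapComp]

lemma pg_swapComp_other (g : G2 n) (i j : Fin 2) (σ : Equiv.Perm (Fin n)) (h : j ≠ i) :
    pg (swapComp g i σ) j = pg g j := by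
  fin_cases i <;> fin_cases j <;> simp_all [pg, swapComp]

/-- step `k` is fresh: its queried pair was not previously queried. -/
def Fresh (g : G2 n) (k : ℕ) : Prop :=
  ∀ j < k, lett v u j = lett v u k → argw v u ω g j ≠ argw v u ω g k

/-- the history of revealed values before step `k`. -/
def hist (g : G2 n) (k : ℕ) : ℕ → Fin n := fun j => if j < k then valw v u ω g j else ω

def Gset (k : ℕ) (T : (ℕ → Fin n) → Fin n) : Finset (G2 n) :=
  Finset.univ.filter (fun g => Fresh v u ω g k ∧ valw v u ω g k = T (hist v u ω g k))

lemma vals_ne (g : G2 n) {j k : ℕ} (hj : j < v.length + u.length)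
    (hk : k < v.length + u.length)
    (hl : lett v u j = lett v u k) (ha : argw v u ω g j ≠ argw v u ω g k) :
    valw v u ω g j ≠ valw v u ω g k := by
  rw [valw_eq v u ω g j hj, valw_eq v u ω g k hk, hl]
  intro h
  exact ha ((pg g (lett v u k))⁻¹.injective h)

lemma swap_preserve (g : G2 n) (k : ℕ) (hk : k < v.length + u.length)
    (c : Fin n) (hfresh : Fresh v u ω g k)
    (hc : ∀ j < k, lett v u j = lett v u k → valw v u ω g j ≠ c) :
    ∀ j, (j ≤ k → argw v u ω (swapComp g (lett v u k) (Equiv.swap (valw v u ω g k) c)) j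
            = argw v u ω g j)
       ∧ (j < k → valw v u ω (swapComp g (lett v u k) (Equiv.swap (valw v u ω g k) c)) j
            = valw v u ω g j) := by
  set Z := lett v u k with hZ
  set σ := Equiv.swap (valw v u ω g k) c with hσ
  set g' := swapComp g Z σ with hg'
  intro j
  induction j using Nat.strong_induction_on with
  | _ j ih =>
    have harg : j ≤ k → argw v u ω g' j = argw v u ω g j := by
      intro hjk
      rcases Nat.eq_zero_or_pos j with h0 | hpos
      · subst h0; simp
      rcases eq_or_ne j v.length with ht | ht
      · rw [ht, argw_t, argw_t]
      · obtain ⟨j', rfl⟩ := Nat.exists_eq_add_of_lt hpos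
        rw [Nat.zero_add] at *
        rw [argw_succ v u ω g' j' ht, argw_succ v u ω g j' ht]
        exact (ih j' (by omega)).2 (by omega)
    refine ⟨harg, ?_⟩
    intro hjk
    have hjm : j < v.length + u.length := by omega
    rw [valw_eq v u ω g' j hjm, valw_eq v u ω g j hjm, harg (le_of_lt hjk)]
    rcases eq_or_ne (lett v u j) Z with hl | hl
    · rw [hl, pg_swapComp_same, mul_inv_rev]
      have : (pg g Z)⁻¹ (argw v u ω g j) = valw v u ω g j := by
        rw [valw_eq v u ω g j hjm, hl]
      simp only [Equiv.Perm.mul_apply, this]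
      have h1 : valw v u ω g j ≠ valw v u ω g k :=
        vals_ne v u ω g hjm hk (hl.trans hZ.symm ▸ rfl) (hfresh j hjk (by rw [hl]))
      have h2 : valw v u ω g j ≠ c := hc j hjk (by rw [hl])
      rw [hσ]
      have : (Equiv.swap (valw v u ω g k) c)⁻¹ = Equiv.swap (valw v u ω g k) c := by
        simp
      rw [this, Equiv.swap_apply_of_ne_of_ne h1 h2]
    · rw [pg_swapComp_other g Z _ σ hl]


lemma swapComp_inj (g1 g2 : G2 n) (i : Fin 2) (σ : Equiv.Perm (Fin n))
    (h : swapComp g1 i σ = swapComp g2 i σ) : g1 = g2 := by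
  by_cases hi : i = 0
  · simp only [swapComp, hi, if_pos, Prod.mk.injEq] at h
    exact Prod.ext (mul_right_cancel h.1) h.2
  · simp only [swapComp, hi, if_neg, ite_false, Prod.mk.injEq] at h
    exact Prod.ext h.1 (mul_right_cancel h.2)

lemma swap_bound (k : ℕ) (hk : k < v.length + u.length) (hmn : v.length + u.length ≤ n)
    (T : (ℕ → Fin n) → Fin n) :
    (n + 1 - (v.length + u.length)) * (Gset v u ω k T).card ≤ (n !) ^ 2 := by
  classical
  set Av : G2 n → Finset (Fin n) := fun g => Finset.univ.filter
      (fun c => ∀ j < k, lett v u j = lett v u k → valw v u ω g j ≠ c) with hAv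
  set S := (Gset v u ω k T).sigma (fun g => Av g) with hS
  set f : (Σ _ : G2 n, Fin n) → G2 n := fun x =>
    swapComp x.1 (lett v u k) (Equiv.swap (valw v u ω x.1 k) x.2) with hf
  -- facts about f on members
  have key : ∀ g ∈ Gset v u ω k T, ∀ c ∈ Av g,
      (∀ j, j < k → valw v u ω (f ⟨g, c⟩) j = valw v u ω g j)
      ∧ valw v u ω (f ⟨g, c⟩) k = c := by
    intro g hg c hc
    rw [Gset, Finset.mem_filter] at hg
    rw [hAv, Finset.mem_filter] at hc
    have hpres := swap_preserve v u ω g k hk c hg.2.1 hc.2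
    constructor
    · intro j hj; exact (hpres j).2 hj
    · rw [hf]
      have harg : argw v u ω (f ⟨g, c⟩) k = argw v u ω g k := (hpres k).1 le_rfl
      rw [hf] at harg
      rw [valw_eq v u ω _ k hk, harg, pg_swapComp_same, mul_inv_rev]
      simp only [Equiv.Perm.mul_apply]
      have : (pg g (lett v u k))⁻¹ (argw v u ω g k) = valw v u ω g k :=
        (valw_eq v u ω g k hk).symm
      rw [this]
      simp
  have hhist : ∀ g ∈ Gset v u ω k T, ∀ c ∈ Av g,
      hist v u ω (f ⟨g, c⟩) k = hist v u ω g k := by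
    intro g hg c hc
    funext j
    unfold hist
    split
    · exact (key g hg c hc).1 j (by assumption)
    · rfl
  have hinj : Set.InjOn f S := by
    intro x hx y hy hxy
    simp only [hS, Finset.coe_sigma, Set.mem_sigma_iff] at hx hy
    obtain ⟨hx1, hx2⟩ := hx
    obtain ⟨hy1, hy2⟩ := hy
    simp only [Finset.mem_coe] at hx1 hx2 hy1 hy2
    have hc : x.2 = y.2 := by
      have e1 := (key x.1 hx1 x.2 hx2).2
      have e2 := (key y.1 hy1 y.2 hy2).2
      have hxy' : f ⟨x.1, x.2⟩ = f ⟨y.1, y.2⟩ := hxy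
      rw [← e1, ← e2, hxy']
    have hw : valw v u ω x.1 k = valw v u ω y.1 k := by
      have m1 := (Finset.mem_filter.mp hx1).2.2
      have m2 := (Finset.mem_filter.mp hy1).2.2
      rw [m1, m2, ← hhist x.1 hx1 x.2 hx2, ← hhist y.1 hy1 y.2 hy2, hxy]
    have : x.1 = y.1 := by
      apply swapComp_inj _ _ (lett v u k) (Equiv.swap (valw v u ω x.1 k) x.2)
      rw [hf] at hxy
      simpa [hw, hc] using hxy
    exact Sigma.ext this (by rw [hc])
  have hcard1 : S.card ≤ (n !) ^ 2 := by
    have := Finset.card_le_card_of_injOn f (fun x _ => Finset.mem_univ (f x)) hinj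
    simpa [Fintype.card_prod, Fintype.card_perm, Fintype.card_fin, sq] using this
  have hcard2 : (n + 1 - (v.length + u.length)) * (Gset v u ω k T).card ≤ S.card := by
    rw [hS, Finset.card_sigma]
    have hA : ∀ g : G2 n, n + 1 - (v.length + u.length) ≤ (Av g).card := by
      intro g
      simp only [hAv]
      have hsplit := Finset.card_filter_add_card_filter_not
        (s := (Finset.univ : Finset (Fin n)))
        (p := fun c => ∀ j < k, lett v u j = lett v u k → valw v u ω g j ≠ c)
      have hC : (Finset.univ.filter
          (fun c => ¬ ∀ j < k, lett v u j = lett v u k → valw v u ω g j ≠ c)).card ≤ k := by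
        have hsub : (Finset.univ.filter
            (fun c => ¬ ∀ j < k, lett v u j = lett v u k → valw v u ω g j ≠ c))
            ⊆ (Finset.range k).image (fun j => valw v u ω g j) := by
          intro c hcm
          rw [Finset.mem_filter] at hcm
          push_neg at hcm
          obtain ⟨j, hj, _, hval⟩ := hcm.2
          exact Finset.mem_image.mpr ⟨j, Finset.mem_range.mpr hj, hval⟩
        calc _ ≤ ((Finset.range k).image (fun j => valw v u ω g j)).card :=
              Finset.card_le_card hsub
          _ ≤ k := le_trans Finset.card_image_le (by simp)
      have hn' : (Finset.univ : Finset (Fin n)).card = n := by simp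
      rw [hn'] at hsplit
      omega
    calc (n + 1 - (v.length + u.length)) * (Gset v u ω k T).card
        = ∑ _g ∈ Gset v u ω k T, (n + 1 - (v.length + u.length)) := by
          rw [Finset.sum_const, smul_eq_mul, mul_comm]
      _ ≤ ∑ g ∈ Gset v u ω k T, (Av g).card := Finset.sum_le_sum (fun g _ => hA g)
  exact le_trans hcard2 hcard1


/-! ### Covering machinery -/

/-- symbolic version of `argw` computed from a history. -/
def argH (h : ℕ → Fin n) (j : ℕ) : Fin n :=
  if j = 0 ∨ j = v.length then ω else h (j - 1)

lemma argH_eq (g : G2 n) (k j : ℕ) (hj : j ≤ k) :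
    argH v ω (hist v u ω g k) j = argw v u ω g j := by
  unfold argH
  split
  · rcases (by assumption : j = 0 ∨ j = v.length) with h | h
    · rw [h, argw_zero]
    · rw [h, argw_t]
  · rename_i hj0
    push_neg at hj0
    obtain ⟨j', rfl⟩ : ∃ j', j = j' + 1 := ⟨j - 1, by omega⟩
    rw [hist]
    rw [if_pos (by omega)]
    rw [argw_succ v u ω g j' hj0.2]
    norm_num

lemma vals_eq (g : G2 n) {j k : ℕ} (hj : j < v.length + u.length)
    (hk : k < v.length + u.length) (hl : lett v u j = lett v u k)
    (ha : argw v u ω g j = argw v u ω g k) : valw v u ω g j = valw v u ω g k := by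
  rw [valw_eq v u ω g j hj, valw_eq v u ω g k hk, hl, ha]

lemma args_eq_of_vals_eq (g : G2 n) {j k : ℕ} (hj : j < v.length + u.length)
    (hk : k < v.length + u.length) (hl : lett v u j = lett v u k)
    (hv : valw v u ω g j = valw v u ω g k) : argw v u ω g j = argw v u ω g k := by
  rw [valw_eq v u ω g j hj, valw_eq v u ω g k hk, hl] at hv
  exact (pg g (lett v u k))⁻¹.injective hv

/-- lookup of a backward query `(Z, p)` in the history together with the
new pair revealed at step `k` (with value `c`). -/
def lookupH (k : ℕ) (h : ℕ → Fin n) (c : Fin n) (Z : Fin 2) (p : Fin n) : Option (Fin n) :=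
  if hs : ((Finset.range k).filter (fun j => lett v u j = Z ∧ argH v ω h j = p)).Nonempty
  then some (h (((Finset.range k).filter (fun j => lett v u j = Z ∧ argH v ω h j = p)).min' hs))
  else if Z = lett v u k ∧ p = argH v ω h k then some c else none

lemma lookupH_cases {k : ℕ} {h : ℕ → Fin n} {c : Fin n} {Z : Fin 2} {p q : Fin n}
    (hq : lookupH v u ω k h c Z p = some q) :
    (∃ i < k, lett v u i = Z ∧ argH v ω h i = p ∧ q = h i)
    ∨ (Z = lett v u k ∧ p = argH v ω h k ∧ q = c) := by
  unfold lookupH at hq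
  split at hq
  · rename_i hs
    left
    have hmem := Finset.min'_mem _ hs
    rw [Finset.mem_filter, Finset.mem_range] at hmem
    exact ⟨_, hmem.1, hmem.2.1, hmem.2.2, (Option.some_inj.mp hq).symm⟩
  · split at hq
    · rename_i hcond
      exact Or.inr ⟨hcond.1, hcond.2, (Option.some_inj.mp hq).symm⟩
    · exact absurd hq (by simp)

lemma lookupH_found {k : ℕ} {h : ℕ → Fin n} {c : Fin n} {Z : Fin 2} {p : Fin n}
    {i : ℕ} (hi : i < k) (hc1 : lett v u i = Z) (hc2 : argH v ω h i = p)
    (hdet : ∀ i' < k, lett v u i' = Z → argH v ω h i' = p → h i' = h i) :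
    lookupH v u ω k h c Z p = some (h i) := by
  unfold lookupH
  have hs : ((Finset.range k).filter (fun j => lett v u j = Z ∧ argH v ω h j = p)).Nonempty :=
    ⟨i, by rw [Finset.mem_filter, Finset.mem_range]; exact ⟨hi, hc1, hc2⟩⟩
  rw [dif_pos hs]
  have hmem := Finset.min'_mem _ hs
  rw [Finset.mem_filter, Finset.mem_range] at hmem
  rw [hdet _ hmem.1 hmem.2.1 hmem.2.2]

lemma lookupH_new {k : ℕ} {h : ℕ → Fin n} {c : Fin n} {Z : Fin 2} {p : Fin n}
    (hs : ∀ i < k, ¬(lett v u i = Z ∧ argH v ω h i = p))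
    (hZ : Z = lett v u k) (hp : p = argH v ω h k) :
    lookupH v u ω k h c Z p = some c := by
  unfold lookupH
  rw [dif_neg, if_pos ⟨hZ, hp⟩]
  rintro ⟨i, hmem⟩
  rw [Finset.mem_filter, Finset.mem_range] at hmem
  exact hs i hmem.1 hmem.2

/-- the forced continuation: positions after steps `k`, `k+1`, ... computed from
the history `h`, the step-`k` value `c`. `contD r` is the value after step `k+r`. -/
def contD (k : ℕ) (h : ℕ → Fin n) (c : Fin n) : ℕ → Option (Fin n)
  | 0 => some c
  | r+1 => (contD k h c r).bind (fun p => lookupH v u ω k h c (lett v u (k+1+r)) p)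

/-- the collision target: the final point of the `v`-walk, read off from history. -/
def TpointH (h : ℕ → Fin n) : Fin n := if v.length = 0 then ω else h (v.length - 1)

def PredGood (k : ℕ) (h : ℕ → Fin n) (c : Fin n) : Prop :=
  (∀ j < k, lett v u j = lett v u k → h j ≠ c) ∧
  contD v u ω k h c (v.length + u.length - 1 - k) = some (TpointH v ω h)

def goodT (k : ℕ) (h : ℕ → Fin n) : Fin n :=
  if hEx : ∃ c, PredGood v u ω k h c then hEx.choose else ω

def Tfun (k : ℕ) : (ℕ → Fin n) → Fin n :=
  if k < v.length then (fun _ => ω) else goodT v u ω k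

def Eset : Finset (G2 n) := Finset.univ.filter (fun g => posF g ω u = posF g ω v)


lemma cont_realized (g : G2 n) (k : ℕ) (hkt : v.length ≤ k) (hkm : k < v.length + u.length)
    (hfresh : Fresh v u ω g k)
    (hlast : ∀ j, k < j → j < v.length + u.length → ¬ Fresh v u ω g j) :
    ∀ r, k + r < v.length + u.length →
      contD v u ω k (hist v u ω g k) (valw v u ω g k) r
        = some (valw v u ω g (k+r)) := by
  intro r
  induction r with
  | zero => intro _; simp [contD]
  | succ r ih =>
    intro hr
    have hr' : k + r < v.length + u.length := by omega
    simp only [contD]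
    rw [ih hr', Option.bind_some]
    have hkr1 : k + (r + 1) = k + 1 + r := by omega
    rw [hkr1]
    set j := k + 1 + r with hj
    have hjm : j < v.length + u.length := by omega
    have hjk : k < j := by omega
    have harg : argw v u ω g j = valw v u ω g (k+r) := by
      have h1 : j = (k+r) + 1 := by omega
      rw [h1, argw_succ v u ω g (k+r) (by omega)]
    rw [← harg]
    have hnf := hlast j hjk hjm
    rw [Fresh] at hnf
    push_neg at hnf
    obtain ⟨i0, hi0j, hi0l, hi0a⟩ := hnf
    have hSne : ((Finset.range j).filter
        (fun i => lett v u i = lett v u j ∧ argw v u ω g i = argw v u ω g j)).Nonempty :=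
      ⟨i0, by rw [Finset.mem_filter, Finset.mem_range]; exact ⟨hi0j, hi0l, hi0a⟩⟩
    set i1 := ((Finset.range j).filter
        (fun i => lett v u i = lett v u j ∧ argw v u ω g i = argw v u ω g j)).min' hSne with hi1
    have hi1mem := Finset.min'_mem _ hSne
    rw [← hi1, Finset.mem_filter, Finset.mem_range] at hi1mem
    have hi1k : i1 ≤ k := by
      by_contra hgt
      push_neg at hgt
      have hnf2 := hlast i1 hgt (by omega)
      rw [Fresh] at hnf2; push_neg at hnf2
      obtain ⟨i2, h2j, h2l, h2a⟩ := hnf2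
      have hmem2 : i2 ∈ (Finset.range j).filter
          (fun i => lett v u i = lett v u j ∧ argw v u ω g i = argw v u ω g j) := by
        rw [Finset.mem_filter, Finset.mem_range]
        exact ⟨by omega, h2l.trans hi1mem.2.1, h2a.trans hi1mem.2.2⟩
      have := Finset.min'_le _ i2 hmem2
      omega
    rcases lt_or_eq_of_le hi1k with hlt | heq
    · have hfound := lookupH_found v u ω (k := k) (h := hist v u ω g k)
        (c := valw v u ω g k) (Z := lett v u j) (p := argw v u ω g j) (i := i1) hlt
        hi1mem.2.1
        (by rw [argH_eq v u ω g k i1 (le_of_lt hlt)]; exact hi1mem.2.2)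
        ?_
      · rw [hfound]
        congr 1
        rw [hist, if_pos hlt]
        exact vals_eq v u ω g (by omega) hjm hi1mem.2.1 hi1mem.2.2
      · intro i' hi' hl' ha'
        rw [argH_eq v u ω g k i' (le_of_lt hi')] at ha'
        rw [hist, if_pos hi', hist, if_pos hlt]
        exact vals_eq v u ω g (by omega) (by omega)
          (hl'.trans hi1mem.2.1.symm) (ha'.trans hi1mem.2.2.symm)
    · have hZ : lett v u j = lett v u k := by
        have h' := hi1mem.2.1
        rw [heq] at h'
        exact h'.symm
      have hak : argw v u ω g j = argw v u ω g k := by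
        have h' := hi1mem.2.2
        rw [heq] at h'
        exact h'.symm
      have hnew := lookupH_new v u ω (k := k) (h := hist v u ω g k)
        (c := valw v u ω g k) (Z := lett v u j) (p := argw v u ω g j)
        (by
          rintro i hik ⟨hl, ha⟩
          rw [argH_eq v u ω g k i (le_of_lt hik)] at ha
          exact hfresh i hik (hl.trans hZ) (ha.trans hak))
        hZ
        (by rw [argH_eq v u ω g k k le_rfl]; exact hak)
      rw [hnew]
      congr 1
      exact vals_eq v u ω g hkm hjm hZ.symm hak.symm


lemma contD_succ_elim {k r : ℕ} {h : ℕ → Fin n} {c q : Fin n}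
    (hq : contD v u ω k h c (r+1) = some q) :
    ∃ p, contD v u ω k h c r = some p
      ∧ lookupH v u ω k h c (lett v u (k+1+r)) p = some q := by
  simp only [contD] at hq
  exact Option.bind_eq_some_iff.mp hq

lemma good_unique (g : G2 n) (k : ℕ) (hkm : k < v.length + u.length)
    (hfresh : Fresh v u ω g k)
    (c' : Fin n) (hc' : PredGood v u ω k (hist v u ω g k) c')
    (hc : PredGood v u ω k (hist v u ω g k) (valw v u ω g k)) :
    c' = valw v u ω g k := by
  by_contra hne
  have main : ∀ r, ∀ p p', contD v u ω k (hist v u ω g k) (valw v u ω g k) r = some p →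
      contD v u ω k (hist v u ω g k) c' r = some p' → p ≠ p' := by
    intro r
    induction r with
    | zero =>
      intro p p' hp hp'
      simp only [contD, Option.some_inj] at hp hp'
      rw [← hp, ← hp']
      intro hcc
      exact hne hcc.symm
    | succ r ih =>
      intro p p' hp hp'
      obtain ⟨q, hq, hlook⟩ := contD_succ_elim v u ω hp
      obtain ⟨q', hq', hlook'⟩ := contD_succ_elim v u ω hp'
      have hqq : q ≠ q' := ih q q' hq hq'
      have hval : ∀ i < k, hist v u ω g k i = valw v u ω g i := by
        intro i hik
        rw [hist, if_pos hik]
      rcases lookupH_cases v u ω hlook with ⟨i, hik, hil, hia, hpi⟩ | ⟨hZ, hpa, hpc⟩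
      · rcases lookupH_cases v u ω hlook' with ⟨i', hik', hil', hia', hpi'⟩ | ⟨hZ', hpa', hpc'⟩
        · intro hpp'
          apply hqq
          have hv : valw v u ω g i = valw v u ω g i' := by
            rw [← hval i hik, ← hval i' hik', ← hpi, ← hpi', hpp']
          have hargs : argw v u ω g i = argw v u ω g i' :=
            args_eq_of_vals_eq v u ω g (by omega) (by omega) (hil.trans hil'.symm) hv
          rw [← hia, ← hia', argH_eq v u ω g k i (le_of_lt hik),
            argH_eq v u ω g k i' (le_of_lt hik'), hargs]
        · intro hpp'
          exact hc'.1 i hik (hil.trans hZ') (by rw [← hpi, hpp']; exact hpc')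
      · rcases lookupH_cases v u ω hlook' with ⟨i', hik', hil', hia', hpi'⟩ | ⟨hZ', hpa', hpc'⟩
        · intro hpp'
          exact hc.1 i' hik' (hil'.trans hZ) (by rw [← hpi', ← hpp']; exact hpc)
        · intro hpp'
          exact hqq (hpa.trans hpa'.symm)
  have hfin := main (v.length + u.length - 1 - k) _ _ hc.2 hc'.2
  exact hfin rfl


lemma cover (hne : ¬(v = [] ∧ u = []))
    (hhd : ∀ a v' b u', v = a :: v' → u = b :: u' → a ≠ b) :
    ∀ g ∈ Eset v u ω, ∃ k, k < v.length + u.length ∧ g ∈ Gset v u ω k (Tfun v u ω k) := by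
  intro g hg
  rw [Eset, Finset.mem_filter] at hg
  have hEv : posF g ω u = posF g ω v := hg.2
  by_cases hA : ∃ k, v.length ≤ k ∧ k < v.length + u.length ∧ Fresh v u ω g k
  · obtain ⟨k0, hk0t, hk0m, hk0f⟩ := hA
    have hk0mem : k0 ∈ (Finset.range (v.length + u.length)).filter
        (fun k => Fresh v u ω g k) := by
      rw [Finset.mem_filter, Finset.mem_range]; exact ⟨hk0m, hk0f⟩
    have hFne : ((Finset.range (v.length + u.length)).filter
        (fun k => Fresh v u ω g k)).Nonempty := ⟨k0, hk0mem⟩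
    set k := ((Finset.range (v.length + u.length)).filter
        (fun k => Fresh v u ω g k)).max' hFne with hk
    have hkmem := Finset.max'_mem _ hFne
    rw [← hk, Finset.mem_filter, Finset.mem_range] at hkmem
    obtain ⟨hkm, hkf⟩ := hkmem
    have hkt : v.length ≤ k := by
      have h1 := Finset.le_max' _ k0 hk0mem
      rw [← hk] at h1
      omega
    have hlast : ∀ j, k < j → j < v.length + u.length → ¬ Fresh v u ω g j := by
      intro j hj1 hj2 hfr
      have h1 : j ∈ (Finset.range (v.length + u.length)).filter
          (fun k => Fresh v u ω g k) := by
        rw [Finset.mem_filter, Finset.mem_range]; exact ⟨hj2, hfr⟩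
      have h2 := Finset.le_max' _ j h1
      rw [← hk] at h2
      omega
    have hval_last : valw v u ω g (v.length + u.length - 1) = posF g ω u := by
      rw [valw, if_neg (by omega)]
      congr 1
      have h1 : v.length + u.length - 1 - v.length + 1 = u.length := by omega
      rw [h1, List.take_length]
    have hT : TpointH v ω (hist v u ω g k) = posF g ω v := by
      rw [TpointH]
      split
      · rename_i h0
        rw [List.length_eq_zero_iff.mp h0]
        rfl
      · rename_i h0
        rw [hist, if_pos (by omega : v.length - 1 < k), valw, if_pos (by omega)]
        have h1 : v.length - 1 + 1 = v.length := by omega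
        rw [h1, List.take_length]
    have hcg : PredGood v u ω k (hist v u ω g k) (valw v u ω g k) := by
      constructor
      · intro j hjk hl
        rw [hist, if_pos hjk]
        exact vals_ne v u ω g (by omega) hkm hl (hkf j hjk hl)
      · have hfin := cont_realized v u ω g k hkt hkm hkf hlast
          (v.length + u.length - 1 - k) (by omega)
        rw [hfin]
        congr 1
        have h1 : k + (v.length + u.length - 1 - k) = v.length + u.length - 1 := by omega
        rw [h1, hval_last, hEv, ← hT]
    refine ⟨k, hkm, ?_⟩
    rw [Gset, Finset.mem_filter]
    refine ⟨Finset.mem_univ _, hkf, ?_⟩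
    rw [Tfun, if_neg (by omega), goodT]
    have hEx : ∃ c, PredGood v u ω k (hist v u ω g k) c := ⟨_, hcg⟩
    rw [dif_pos hEx]
    exact (good_unique v u ω g k hkm hkf _ hEx.choose_spec hcg).symm
  · push_neg at hA
    have hex : ∃ j, j < v.length ∧ valw v u ω g j = ω := by
      by_cases hs : u.length = 0
      · have hu : u = [] := List.length_eq_zero_iff.mp hs
        have ht1 : 1 ≤ v.length := by
          rcases Nat.eq_zero_or_pos v.length with h0 | h1
          · exact absurd ⟨List.length_eq_zero_iff.mp h0, hu⟩ hne
          · omega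
        refine ⟨v.length - 1, by omega, ?_⟩
        rw [valw, if_pos (by omega)]
        have h1 : v.length - 1 + 1 = v.length := by omega
        rw [h1, List.take_length, ← hEv, hu]
        rfl
      · have htm : v.length < v.length + u.length := by omega
        have hnf := hA v.length le_rfl htm
        rw [Fresh] at hnf; push_neg at hnf
        obtain ⟨j, hjt, hjl, hja⟩ := hnf
        have ht1 : 1 ≤ v.length := by omega
        rcases Nat.eq_zero_or_pos j with rfl | hj1
        · exfalso
          obtain ⟨a, v', hv⟩ := List.exists_cons_of_ne_nil
            (List.length_pos_iff.mp (by omega) : v ≠ [])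
          obtain ⟨b, u', hu⟩ := List.exists_cons_of_ne_nil
            (List.length_pos_iff.mp (by omega) : u ≠ [])
          apply hhd a v' b u' hv hu
          have h1 : lett v u 0 = a := by rw [lett_lt v u 0 (by omega), hv]; rfl
          have h2 : lett v u v.length = b := by
            rw [lett_ge v u v.length le_rfl, Nat.sub_self, hu]
            rfl
          rw [← h1, ← h2]
          exact hjl
        · refine ⟨j - 1, by omega, ?_⟩
          have hj' : (j - 1) + 1 = j := by omega
          have h3 := argw_succ v u ω g (j-1) (by omega)
          rw [hj', hja, argw_t] at h3
          exact h3.symm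
    obtain ⟨j0, hj0, hv0⟩ := hex
    have hj0mem : j0 ∈ (Finset.range v.length).filter (fun j => valw v u ω g j = ω) := by
      rw [Finset.mem_filter, Finset.mem_range]; exact ⟨hj0, hv0⟩
    have hSne : ((Finset.range v.length).filter (fun j => valw v u ω g j = ω)).Nonempty :=
      ⟨j0, hj0mem⟩
    set r := ((Finset.range v.length).filter (fun j => valw v u ω g j = ω)).min' hSne with hr
    have hrmem := Finset.min'_mem _ hSne
    rw [← hr, Finset.mem_filter, Finset.mem_range] at hrmem
    refine ⟨r, by omega, ?_⟩
    rw [Gset, Finset.mem_filter]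
    have hfr : Fresh v u ω g r := by
      intro i hir hil hia
      have h1 : valw v u ω g i = valw v u ω g r := vals_eq v u ω g (by omega) (by omega) hil hia
      have hmem : i ∈ (Finset.range v.length).filter (fun j => valw v u ω g j = ω) := by
        rw [Finset.mem_filter, Finset.mem_range]
        exact ⟨by omega, h1.trans hrmem.2⟩
      have h2 := Finset.min'_le _ i hmem
      rw [← hr] at h2
      omega
    refine ⟨Finset.mem_univ _, hfr, ?_⟩
    rw [Tfun, if_pos (by omega : r < v.length)]
    exact hrmem.2

/-- The core counting bound. -/
lemma core_bound (hmn : v.length + u.length ≤ n)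
    (hne : ¬(v = [] ∧ u = []))
    (hhd : ∀ a v' b u', v = a :: v' → u = b :: u' → a ≠ b) :
    (n + 1 - (v.length + u.length)) * (Eset v u ω).card
      ≤ (v.length + u.length) * (n !) ^ 2 := by
  have hsub : Eset v u ω ⊆ (Finset.range (v.length + u.length)).biUnion
      (fun k => Gset v u ω k (Tfun v u ω k)) := by
    intro g hg
    obtain ⟨k, hk, hmem⟩ := cover v u ω hne hhd g hg
    exact Finset.mem_biUnion.mpr ⟨k, Finset.mem_range.mpr hk, hmem⟩
  calc (n + 1 - (v.length + u.length)) * (Eset v u ω).card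
      ≤ (n + 1 - (v.length + u.length)) * ∑ k ∈ Finset.range (v.length + u.length),
          (Gset v u ω k (Tfun v u ω k)).card := by
        apply Nat.mul_le_mul_left
        exact le_trans (Finset.card_le_card hsub) (Finset.card_biUnion_le)
    _ = ∑ k ∈ Finset.range (v.length + u.length),
          (n + 1 - (v.length + u.length)) * (Gset v u ω k (Tfun v u ω k)).card := by
        rw [Finset.mul_sum]
    _ ≤ ∑ _k ∈ Finset.range (v.length + u.length), (n !) ^ 2 := by
        apply Finset.sum_le_sum
        intro k hk
        exact swap_bound v u ω k (Finset.mem_range.mp hk) hmn (Tfun v u ω k)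
    _ = (v.length + u.length) * (n !) ^ 2 := by
        rw [Finset.sum_const, Finset.card_range, smul_eq_mul]


/-! ### Reductions -/

lemma posF_conj (c : Equiv.Perm (Fin n)) (g : G2 n) (p : Fin n) (l : List (Fin 2)) :
    posF (c * g.1 * c⁻¹, c * g.2 * c⁻¹) (c p) l = c (posF g p l) := by
  induction l generalizing p with
  | nil => simp
  | cons a l ih =>
    rw [posF_cons, posF_cons]
    have h1 : (pg (c * g.1 * c⁻¹, c * g.2 * c⁻¹) a)⁻¹ (c p) = c ((pg g a)⁻¹ p) := by
      fin_cases a <;> simp [pg, mul_inv_rev, Equiv.Perm.mul_apply]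
    rw [h1, ih]

lemma cardE_omega (v u : List (Fin 2)) (ω₁ ω₂ : Fin n) :
    (Eset v u ω₁).card = (Eset v u ω₂).card := by
  set c := Equiv.swap ω₁ ω₂ with hc
  have hcω : c ω₁ = ω₂ := Equiv.swap_apply_left ω₁ ω₂
  apply Finset.card_bij (fun g _ => ((c * g.1 * c⁻¹, c * g.2 * c⁻¹) : G2 n))
  · intro g hg
    rw [Eset, Finset.mem_filter] at hg ⊢
    refine ⟨Finset.mem_univ _, ?_⟩
    rw [← hcω, posF_conj, posF_conj, hg.2]
  · intro g1 h1 g2 h2 heq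
    rw [Prod.mk.injEq] at heq
    have e1 : g1.1 = g2.1 := by
      have := heq.1
      group at this
      exact mul_left_cancel (mul_right_cancel this)
    have e2 : g1.2 = g2.2 := by
      have := heq.2
      group at this
      exact mul_left_cancel (mul_right_cancel this)
    exact Prod.ext e1 e2
  · intro g' hg'
    refine ⟨(c⁻¹ * g'.1 * c, c⁻¹ * g'.2 * c), ?_, ?_⟩
    · rw [Eset, Finset.mem_filter] at hg' ⊢
      refine ⟨Finset.mem_univ _, ?_⟩
      have hω₁ : ω₁ = c⁻¹ ω₂ := by rw [← hcω]; simp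
      have hconj := posF_conj c⁻¹ (g'.1, g'.2) ω₂
      simp only [inv_inv] at hconj
      rw [hω₁, hconj, hconj, hg'.2]
    · show (c * (c⁻¹ * g'.1 * c) * c⁻¹, c * (c⁻¹ * g'.2 * c) * c⁻¹) = g'
      refine Prod.ext ?_ ?_ <;> simp [mul_assoc]

lemma fixcount_cons (v u : List (Fin 2)) (a : Fin 2) (g : G2 n) :
    (Finset.univ.filter
        (fun ω' : Fin n => posF g ω' (a :: u) = posF g ω' (a :: v))).card
    = (Finset.univ.filter (fun ω' : Fin n => posF g ω' u = posF g ω' v)).card := by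
  apply Finset.card_bij (fun ω' _ => (pg g a)⁻¹ ω')
  · intro ω' h
    rw [Finset.mem_filter] at h ⊢
    exact ⟨Finset.mem_univ _, h.2⟩
  · intro ω1 h1 ω2 h2 heq
    exact (pg g a)⁻¹.injective heq
  · intro ρ hρ
    rw [Finset.mem_filter] at hρ
    refine ⟨pg g a ρ, ?_, by simp⟩
    rw [Finset.mem_filter]
    refine ⟨Finset.mem_univ _, ?_⟩
    rw [posF_cons, posF_cons]
    simpa using hρ.2

lemma sum_card_eq (v u : List (Fin 2)) :
    ∑ ω' : Fin n, (Eset v u ω').card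
    = ∑ g : G2 n, (Finset.univ.filter
        (fun ω' : Fin n => posF g ω' u = posF g ω' v)).card := by
  simp only [Eset, Finset.card_filter]
  rw [Finset.sum_comm]

lemma cardE_cons (v u : List (Fin 2)) (ω : Fin n) (a : Fin 2) (hn0 : 0 < n) :
    (Eset (a :: v) (a :: u) ω).card = (Eset v u ω).card := by
  have key : n * (Eset (a :: v) (a :: u) ω).card = n * (Eset v u ω).card := by
    have h1 : ∑ ω' : Fin n, (Eset (a :: v) (a :: u) ω').card
        = n * (Eset (a :: v) (a :: u) ω).card := by
      rw [Finset.sum_congr rfl (fun ω' _ => cardE_omega (a::v) (a::u) ω' ω)]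
      simp [Finset.sum_const, mul_comm]
    have h2 : ∑ ω' : Fin n, (Eset v u ω').card = n * (Eset v u ω).card := by
      rw [Finset.sum_congr rfl (fun ω' _ => cardE_omega v u ω' ω)]
      simp [Finset.sum_const, mul_comm]
    rw [← h1, ← h2, sum_card_eq, sum_card_eq]
    exact Finset.sum_congr rfl (fun g _ => fixcount_cons v u a g)
  exact Nat.eq_of_mul_eq_mul_left hn0 key

/-- strip the common prefix of two lists. -/
def sp : List (Fin 2) → List (Fin 2) → List (Fin 2) × List (Fin 2)
  | a :: v', b :: u' => if a = b then sp v' u' else (a :: v', b :: u')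
  | v', u' => (v', u')

lemma sp_nil_left (u : List (Fin 2)) : sp [] u = ([], u) := rfl

lemma sp_nil_right (a : Fin 2) (v : List (Fin 2)) : sp (a :: v) [] = (a :: v, []) := rfl

lemma sp_cons (a b : Fin 2) (v u : List (Fin 2)) :
    sp (a :: v) (b :: u) = if a = b then sp v u else (a :: v, b :: u) := rfl

lemma sp_len : ∀ v u : List (Fin 2),
    (sp v u).1.length + (sp v u).2.length ≤ v.length + u.length := by
  intro v
  induction v with
  | nil => intro u; simp [sp_nil_left]
  | cons a v' ih =>
    intro u
    cases u with
    | nil => simp [sp_nil_right]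
    | cons b u' =>
      by_cases hab : a = b
      · rw [sp_cons, if_pos hab]
        calc _ ≤ v'.length + u'.length := ih u'
          _ ≤ _ := by simp; omega
      · rw [sp_cons, if_neg hab]

lemma sp_ne : ∀ v u : List (Fin 2), v ≠ u → (sp v u).1 ≠ (sp v u).2 := by
  intro v
  induction v with
  | nil => intro u h; simpa [sp_nil_left] using h
  | cons a v' ih =>
    intro u h
    cases u with
    | nil => simpa [sp_nil_right] using h
    | cons b u' =>
      by_cases hab : a = b
      · rw [sp_cons, if_pos hab]
        apply ih
        intro hvu
        exact h (by rw [hab, hvu])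
      · rw [sp_cons, if_neg hab]
        intro hcontra
        exact hab (by injection hcontra)

lemma sp_hd : ∀ v u : List (Fin 2), ∀ a v' b u',
    (sp v u).1 = a :: v' → (sp v u).2 = b :: u' → a ≠ b := by
  intro v
  induction v with
  | nil =>
    intro u a v' b u' h1 h2
    rw [sp_nil_left] at h1
    exact absurd h1 (by simp)
  | cons x v₀ ih =>
    intro u a v' b u' h1 h2
    cases u with
    | nil =>
      rw [sp_nil_right] at h2
      exact absurd h2 (by simp)
    | cons y u₀ =>
      by_cases hxy : x = y
      · rw [sp_cons, if_pos hxy] at h1 h2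
        exact ih u₀ a v' b u' h1 h2
      · rw [sp_cons, if_neg hxy] at h1 h2
        injection h1 with h1a _
        injection h2 with h2a _
        rw [← h1a, ← h2a]
        exact hxy

lemma sp_card (ω : Fin n) (hn0 : 0 < n) : ∀ v u : List (Fin 2),
    (Eset v u ω).card = (Eset (sp v u).1 (sp v u).2 ω).card := by
  intro v
  induction v with
  | nil => intro u; rw [sp_nil_left]
  | cons a v' ih =>
    intro u
    cases u with
    | nil => rw [sp_nil_right]
    | cons b u' =>
      by_cases hab : a = b
      · rw [sp_cons, if_pos hab, ← ih u', ← hab]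
        exact cardE_cons v' u' ω a hn0
      · rw [sp_cons, if_neg hab]

end Core2
end FPB

open FPB in
theorem fixed_point_probability_bound (u v : FreeMonoid (Fin 2)) (huv : u ≠ v)
    (n : ℕ) (hn : u.length + v.length < n) (ω : Fin n) :
    (Nat.card {p : Perm (Fin n) × Perm (Fin n) //
          (FreeMonoid.lift ![p.1, p.2] u * (FreeMonoid.lift ![p.1, p.2] v)⁻¹) ω = ω} : ℝ) /
        ((n ! : ℝ)) ^ 2 ≤
      ((u.length + v.length : ℕ) : ℝ) / ((n : ℝ) - ((u.length + v.length : ℕ) : ℝ)) := by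
  classical
  have hn0 : 0 < n := by omega
  set Lu := FreeMonoid.toList u with hLu
  set Lv := FreeMonoid.toList v with hLv
  -- event condition rewrite
  have cond_iff : ∀ g : G2 n,
      ((FreeMonoid.lift ![g.1, g.2] u * (FreeMonoid.lift ![g.1, g.2] v)⁻¹) ω = ω)
      ↔ posF g ω Lu = posF g ω Lv := by
    intro g
    have hu' : posF g ω Lu = (FreeMonoid.lift ![g.1, g.2] u)⁻¹ ω := by
      rw [posF_lift]
      rfl
    have hv' : posF g ω Lv = (FreeMonoid.lift ![g.1, g.2] v)⁻¹ ω := by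
      rw [posF_lift]
      rfl
    rw [hu', hv', Equiv.Perm.mul_apply]
    constructor
    · intro h
      have h2 := congrArg (fun z => (FreeMonoid.lift ![g.1, g.2] u)⁻¹ z) h
      simpa using h2.symm
    · intro h
      rw [← h]
      simp
  -- count as a Finset card
  have hcard : (Nat.card {p : Perm (Fin n) × Perm (Fin n) //
      (FreeMonoid.lift ![p.1, p.2] u * (FreeMonoid.lift ![p.1, p.2] v)⁻¹) ω = ω})
      = (Eset Lv Lu ω).card := by
    rw [Nat.card_eq_fintype_card, Fintype.card_subtype]
    congr 1
    ext g
    simp only [Finset.mem_filter, Eset]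
    exact and_congr_right (fun _ => cond_iff g)
  -- strip common prefix
  have hneq : Lv ≠ Lu := by
    intro h
    apply huv
    have := congrArg FreeMonoid.ofList h
    rw [hLu, hLv] at this
    rw [FreeMonoid.ofList_toList, FreeMonoid.ofList_toList] at this
    exact this.symm
  have hP := sp_ne Lv Lu hneq
  have hnboth : ¬((sp Lv Lu).1 = [] ∧ (sp Lv Lu).2 = []) := by
    rintro ⟨h1, h2⟩
    exact hP (h1.trans h2.symm)
  have hlen : (sp Lv Lu).1.length + (sp Lv Lu).2.length ≤ Lv.length + Lu.length :=
    sp_len Lv Lu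
  have hLulen : Lu.length = u.length := rfl
  have hLvlen : Lv.length = v.length := rfl
  set m := (sp Lv Lu).1.length + (sp Lv Lu).2.length with hm
  have hmℓ : m ≤ u.length + v.length := by
    rw [hm]
    omega
  have hmn : m ≤ n := by omega
  have hcore := core_bound (sp Lv Lu).1 (sp Lv Lu).2 ω hmn hnboth (sp_hd Lv Lu)
  rw [← hm] at hcore
  have hstrip : (Eset Lv Lu ω).card = (Eset (sp Lv Lu).1 (sp Lv Lu).2 ω).card :=
    sp_card ω hn0 Lv Lu
  -- real arithmetic
  rw [hcard, hstrip]
  set C := (Eset (sp Lv Lu).1 (sp Lv Lu).2 ω).card with hC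
  set ℓ := u.length + v.length with hℓ
  have hfac : (0:ℝ) < ((n ! : ℝ)) ^ 2 := by
    positivity
  have hpos1 : (0:ℝ) < (n : ℝ) + 1 - (m : ℝ) := by
    have : (m:ℝ) ≤ (n:ℝ) := by exact_mod_cast hmn
    linarith
  have hpos2 : (0:ℝ) < (n : ℝ) - (ℓ : ℝ) := by
    have : (ℓ:ℝ) < (n:ℝ) := by exact_mod_cast hn
    linarith
  have hcast : ((n + 1 - m : ℕ) : ℝ) = (n:ℝ) + 1 - (m:ℝ) := by
    rw [Nat.cast_sub (by omega)]
    push_cast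
    ring
  have hcoreR : ((n:ℝ) + 1 - (m:ℝ)) * (C:ℝ) ≤ (m:ℝ) * ((n ! : ℝ))^2 := by
    have := hcore
    have h2 : (((n + 1 - m) * C : ℕ) : ℝ) ≤ (((m * (n !)^2 : ℕ)) : ℝ) := by
      exact_mod_cast this
    push_cast at h2
    rw [Nat.cast_sub (by omega)] at h2
    push_cast at h2
    linarith
  have hmR : (m:ℝ) ≤ (ℓ:ℝ) := by exact_mod_cast hmℓ
  have hnR : (ℓ:ℝ) < (n:ℝ) := by exact_mod_cast hn
  calc (C : ℝ) / ((n ! : ℝ))^2 ≤ (m:ℝ) / ((n:ℝ) + 1 - (m:ℝ)) := by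
        rw [div_le_div_iff₀ hfac hpos1]
        linarith
    _ ≤ (ℓ:ℝ) / ((n:ℝ) - (ℓ:ℝ)) := by
        rw [div_le_div_iff₀ hpos1 hpos2]
        have hnn : (0:ℝ) ≤ (n:ℝ) := by positivity
        nlinarith [mul_nonneg hnn (sub_nonneg.mpr hmR)]
end
end
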